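/- arXiv:1709.01345 — 13 statements merged into one kernel-verified Lean document; each statement's English description precedes it below -/
import Mathlib

section
/- Let p be a prime, s ≥ 1, and let k, k₁, …, kₙ be nonnegative integers with k = k₁ + ⋯ + kₙ. If pˢ divides k and some kⱼ is coprime to p, then pˢ divides the multinomial coefficient k!/(k₁!⋯kₙ!). -/
theorem multinomial_prime_pow_dvd (p : ℕ) (hp : p.Prime) (s n : ℕ) (hs : 1 ≤ s)
    (hn : 1 ≤ n) (f : Fin n → ℕ) (k : ℕ) (hk : k = ∑ i, f i)
    (hdvd : p ^ s ∣ k) (j : Fin n) (hcop : Nat.Coprime (f j) p) :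
    p ^ s ∣ Nat.multinomial Finset.univ f := by
  -- f j ≥ 1 since coprime with prime p
  have hfj : 1 ≤ f j := by
    rcases Nat.eq_zero_or_pos (f j) with h | h
    · exfalso
      rw [h] at hcop
      exact hp.one_lt.ne' (Nat.coprime_zero_left p |>.mp hcop)
    · exact h
  have hjk : f j ≤ k := by
    rw [hk]
    exact Finset.single_le_sum (fun i _ => Nat.zero_le _) (Finset.mem_univ j)
  -- p^s ∣ choose k (f j)
  have hchoose : p ^ s ∣ Nat.choose k (f j) := by
    have key : k * Nat.choose (k - 1) (f j - 1) = Nat.choose k (f j) * f j := by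
      have key := Nat.add_one_mul_choose_eq (k - 1) (f j - 1)
      have e1 : k - 1 + 1 = k := Nat.succ_pred_eq_of_pos (le_trans hfj hjk)
      have e2 : f j - 1 + 1 = f j := Nat.succ_pred_eq_of_pos hfj
      rwa [e1, e2] at key
    have hdvd2 : p ^ s ∣ Nat.choose k (f j) * f j := key ▸ Dvd.dvd.mul_right hdvd _
    have hcop2 : Nat.Coprime (p ^ s) (f j) :=
      (Nat.Coprime.pow_left s hcop.symm)
    exact (Nat.Coprime.dvd_of_dvd_mul_right hcop2 hdvd2)
  -- multinomial = choose k (f j) * multinomial rest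
  have hins : Nat.multinomial Finset.univ f =
      Nat.choose (f j + ∑ i ∈ Finset.univ.erase j, f i) (f j) *
        Nat.multinomial (Finset.univ.erase j) f := by
    have := Nat.multinomial_insert (s := Finset.univ.erase j) (f := f)
      (Finset.notMem_erase j Finset.univ)
    rw [Finset.insert_erase (Finset.mem_univ j)] at this
    simpa using this
  have hsum : f j + ∑ i ∈ Finset.univ.erase j, f i = k := by
    rw [hk, Finset.add_sum_erase _ _ (Finset.mem_univ j)]
  rw [hins, hsum]
  exact hchoose.mul_right _
end

section
/- Let n, m ≥ 1 and let l₁,…,lₙ, k₁,…,kₙ, k be nonnegative integers such that k = k₁ + ⋯ + kₙ, k is even, each lᵢ is even, and 2^(m+1) − 2 = l₁k₁ + ⋯ + lₙkₙ. Then 2 divides the multinomial coefficient k!/(k₁!⋯kₙ!). -/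
theorem two_dvd_multinomial (n m : ℕ) (hn : 1 ≤ n) (hm : 1 ≤ m)
    (l f : Fin n → ℕ) (k : ℕ) (hk : k = ∑ i, f i)
    (hke : 2 ∣ k) (hle : ∀ i, 2 ∣ l i)
    (hsum : 2 ^ (m + 1) - 2 = ∑ i, l i * f i) :
    2 ∣ Nat.multinomial Finset.univ f := by
  -- choose c with l i = 2 * c i
  choose c hc using hle
  have hsum2 : (2:ℕ) * (2 ^ m - 1) = 2 * ∑ i, c i * f i := by
    have h1 : (2:ℕ) * (2 ^ m - 1) = 2 ^ (m + 1) - 2 := by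
      have : 1 ≤ 2 ^ m := Nat.one_le_two_pow
      rw [Nat.mul_sub_one] at *
      rw [pow_succ]
      omega
    rw [h1, hsum, Finset.mul_sum]
    exact Finset.sum_congr rfl fun i _ => by rw [hc i, mul_assoc]
  have hodd : ¬ 2 ∣ ∑ i, c i * f i := by
    have : (∑ i, c i * f i) = 2 ^ m - 1 := by omega
    rw [this]
    have h2 : 2 ∣ 2 ^ m := dvd_pow_self 2 (by omega)
    have : 1 ≤ 2 ^ m := Nat.one_le_two_pow
    omega
  have hex : ∃ i, ¬ 2 ∣ f i := by
    by_contra h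
    push_neg at h
    exact hodd (Finset.dvd_sum fun i _ => (h i).mul_left _)
  obtain ⟨i, hi⟩ := hex
  -- split the multinomial
  have hins : (Finset.univ : Finset (Fin n)) = insert i (Finset.univ.erase i) := by
    rw [Finset.insert_erase (Finset.mem_univ i)]
  rw [hins, Nat.multinomial_insert (Finset.notMem_erase i _)]
  have hks : f i + ∑ j ∈ Finset.univ.erase i, f j = k := by
    rw [hk, Finset.add_sum_erase _ f (Finset.mem_univ i)]
  rw [hks]
  apply Dvd.dvd.mul_right
  -- now show 2 ∣ k.choose (f i) with k even, f i odd
  rcases lt_or_ge k (f i) with h | h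
  · rw [Nat.choose_eq_zero_of_lt h]; exact dvd_zero 2
  · obtain ⟨j, hj⟩ : ∃ j, f i = j + 1 := ⟨f i - 1, by omega⟩
    obtain ⟨t, ht⟩ : ∃ t, k = t + 1 := ⟨k - 1, by omega⟩
    have key : (t + 1) * Nat.choose t j = Nat.choose (t + 1) (j + 1) * (j + 1) :=
      Nat.add_one_mul_choose_eq t j
    have h2 : 2 ∣ Nat.choose (t + 1) (j + 1) * (j + 1) := by
      rw [← key]; exact Dvd.dvd.mul_right (ht ▸ hke) _
    rw [ht, hj]
    rcases (Nat.prime_two.dvd_mul.mp h2) with h' | h'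
    · exact h'
    · exact absurd (hj ▸ h') hi
end

section
/- For each j ∈ ℕ, the polynomial x^(2^(j+1)−2) does not belong to the smallest subset of ℤ[x] containing {x^(2^(i+1)−2) : i ∈ ℕ, i ≠ j} that is closed under addition, negation, and composition of polynomials. -/
open Polynomial

/-- Membership in the subnearring of `(ℤ[x], +, ∘)` generated by `S`:
the smallest subset of `ℤ[x]` containing `S` that is an additive subgroup
and is closed under composition of polynomials. -/
inductive NRGen (S : Set (Polynomial ℤ)) : Polynomial ℤ → Prop
  | mem {p : Polynomial ℤ} : p ∈ S → NRGen S p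
  | zero : NRGen S 0
  | add {p q : Polynomial ℤ} : NRGen S p → NRGen S q → NRGen S (p + q)
  | neg {p : Polynomial ℤ} : NRGen S p → NRGen S (-p)
  | comp {p q : Polynomial ℤ} : NRGen S p → NRGen S q → NRGen S (p.comp q)

/-- The set of "allowed" exponents (mod 2): divisible by 4 or a generator exponent. -/
def GoodExp (j : ℕ+) (n : ℕ) : Prop :=
  4 ∣ n ∨ ∃ i : ℕ+, i ≠ j ∧ n = 2 ^ ((i : ℕ) + 1) - 2

def Good (j : ℕ+) (p : Polynomial (ZMod 2)) : Prop :=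
  ∀ n : ℕ, p.coeff n ≠ 0 → GoodExp j n

lemma frob2 : frobenius (ZMod 2) 2 = RingHom.id (ZMod 2) := by
  refine RingHom.ext fun a => ?_
  rw [frobenius_def]
  revert a; decide

lemma sq_eq_expand (f : Polynomial (ZMod 2)) : f ^ 2 = expand (ZMod 2) 2 f := by
  have h := map_frobenius_expand 2 f
  rwa [frob2, Polynomial.map_id, eq_comm] at h

lemma goodexp_even {j : ℕ+} {n : ℕ} (h : GoodExp j n) : 2 ∣ n := by
  rcases h with h | ⟨i, _, rfl⟩
  · omega
  · have : 2 ^ ((i : ℕ) + 1) = 2 * 2 ^ (i : ℕ) := by rw [pow_succ]; ring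
    omega

lemma pow_supp_four {f : Polynomial (ZMod 2)} (hf : ∀ n : ℕ, f.coeff n ≠ 0 → 4 ∣ n)
    (m : ℕ) : ∀ n : ℕ, (f ^ m).coeff n ≠ 0 → 4 ∣ n := by
  induction m with
  | zero =>
    intro n hn
    simp only [pow_zero, coeff_one] at hn
    split at hn
    · omega
    · exact absurd rfl hn
  | succ m ih =>
    intro n hn
    rw [pow_succ, coeff_mul] at hn
    obtain ⟨x, hx, hne⟩ := Finset.exists_ne_zero_of_sum_ne_zero hn
    rw [Finset.HasAntidiagonal.mem_antidiagonal] at hx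
    have h1 : (f ^ m).coeff x.1 ≠ 0 := fun h => hne (by rw [h, zero_mul])
    have h2 : f.coeff x.2 ≠ 0 := fun h => hne (by rw [h, mul_zero])
    have := ih x.1 h1
    have := hf x.2 h2
    omega

lemma good_comp {j : ℕ+} {p q : Polynomial (ZMod 2)} (hp : Good j p) (hq : Good j q) :
    Good j (p.comp q) := by
  intro n hn
  rw [comp_eq_sum_left, Polynomial.sum, finset_sum_coeff] at hn
  obtain ⟨k, hk, hne⟩ := Finset.exists_ne_zero_of_sum_ne_zero hn
  rw [coeff_C_mul] at hne
  have hqk : (q ^ k).coeff n ≠ 0 := fun h => hne (by rw [h, mul_zero])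
  have hkS : GoodExp j k := hp k (mem_support_iff.mp hk)
  -- k is even
  obtain ⟨m, rfl⟩ := goodexp_even hkS
  -- q^(2m) = (expand 2 q)^m, whose support is in 4ℕ
  have hq2 : q ^ (2 * m) = (expand (ZMod 2) 2 q) ^ m := by
    rw [mul_comm, pow_mul, sq_eq_expand, map_pow]
  rw [hq2] at hqk
  have h4 : ∀ n' : ℕ, (expand (ZMod 2) 2 q).coeff n' ≠ 0 → 4 ∣ n' := by
    intro n' hn'
    rw [coeff_expand (by norm_num)] at hn'
    split at hn'
    · rename_i hdvd
      have := goodexp_even (hq _ hn')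
      omega
    · exact absurd rfl hn'
  exact Or.inl (pow_supp_four h4 m n hqk)

lemma exp_inj {i j : ℕ+} (h : 2 ^ ((i : ℕ) + 1) - 2 = 2 ^ ((j : ℕ) + 1) - 2) : i = j := by
  have hi : 2 ≤ 2 ^ ((i : ℕ) + 1) := by
    calc 2 = 2 ^ 1 := rfl
    _ ≤ 2 ^ ((i : ℕ) + 1) := Nat.pow_le_pow_right (by norm_num) (by omega)
  have hj : 2 ≤ 2 ^ ((j : ℕ) + 1) := by
    calc 2 = 2 ^ 1 := rfl
    _ ≤ 2 ^ ((j : ℕ) + 1) := Nat.pow_le_pow_right (by norm_num) (by omega)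
  have heq : 2 ^ ((i : ℕ) + 1) = 2 ^ ((j : ℕ) + 1) := by omega
  have := Nat.pow_right_injective (le_refl 2) heq
  have : (i : ℕ) = (j : ℕ) := by omega
  exact PNat.coe_injective this

lemma target_not_good (j : ℕ+) : ¬ GoodExp j (2 ^ ((j : ℕ) + 1) - 2) := by
  rintro (h | ⟨i, hij, hieq⟩)
  · have hj1 : 1 ≤ (j : ℕ) := j.one_le
    have h1 : (j : ℕ) + 1 = ((j : ℕ) - 1) + 2 := by omega
    have h2 : 2 ^ ((j : ℕ) + 1) = 2 ^ ((j : ℕ) - 1) * 4 := by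
      rw [h1, pow_add]; norm_num
    have h3 : 1 ≤ 2 ^ ((j : ℕ) - 1) := Nat.one_le_two_pow
    omega
  · exact hij (exp_inj hieq.symm)

lemma nrgen_good (j : ℕ+) (p : Polynomial ℤ)
    (h : NRGen {q : Polynomial ℤ | ∃ i : ℕ+, i ≠ j ∧ q = X ^ (2 ^ ((i : ℕ) + 1) - 2)} p) :
    Good j (p.map (Int.castRingHom (ZMod 2))) := by
  induction h with
  | mem hp =>
    obtain ⟨i, hij, rfl⟩ := hp
    intro n hn
    rw [Polynomial.map_pow, map_X, coeff_X_pow] at hn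
    split at hn
    · exact Or.inr ⟨i, hij, by omega⟩
    · exact absurd rfl hn
  | zero =>
    intro n hn
    simp at hn
  | @add a b hp hq ihp ihq =>
    intro n hn
    rw [Polynomial.map_add, coeff_add] at hn
    by_cases h1 : (Polynomial.map (Int.castRingHom (ZMod 2)) a).coeff n = 0
    · exact ihq n (fun h2 => hn (by rw [h1, h2, add_zero]))
    · exact ihp n h1
  | neg hp ihp =>
    intro n hn
    rw [Polynomial.map_neg, coeff_neg] at hn
    exact ihp n (fun h => hn (by rw [h, neg_zero]))
  | comp hp hq ihp ihq =>
    rw [Polynomial.map_comp]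
    exact good_comp ihp ihq

theorem pj_not_in_gen_of_others (j : ℕ+) :
    ¬ NRGen {q : Polynomial ℤ | ∃ i : ℕ+, i ≠ j ∧ q = X ^ (2 ^ ((i : ℕ) + 1) - 2)}
      (X ^ (2 ^ ((j : ℕ) + 1) - 2)) := by
  intro h
  have hg := nrgen_good j _ h
  have : ((X : Polynomial ℤ) ^ (2 ^ ((j : ℕ) + 1) - 2)).map
      (Int.castRingHom (ZMod 2)) = X ^ (2 ^ ((j : ℕ) + 1) - 2) := by
    rw [Polynomial.map_pow, map_X]
  rw [this] at hg
  have hc := hg (2 ^ ((j : ℕ) + 1) - 2) (by rw [coeff_X_pow]; simp)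
  exact target_not_good j hc
end

section
/- The nearring (ℤ[x], +, ∘) contains an infinite strictly descending chain of finitely generated subnearrings: with Nᵢ the subnearring generated by {x^(2^(2^i))}, one has N_{i+1} ⊊ Nᵢ for all i ∈ ℕ. -/
open Polynomial

lemma NRGen.dvd_gen {m : ℕ} (hm : 1 ≤ m) {p : Polynomial ℤ}
    (h : NRGen {X ^ m} p) : (X : Polynomial ℤ) ^ m ∣ p := by
  induction h with
  | mem hp => rw [Set.mem_singleton_iff.mp hp]
  | zero => exact dvd_zero _
  | add _ _ ih1 ih2 => exact dvd_add ih1 ih2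
  | neg _ ih => exact ih.neg_right
  | comp _ _ ih1 ih2 =>
    obtain ⟨r, hr⟩ := ih1
    rw [hr, mul_comp, pow_comp, X_comp]
    exact Dvd.dvd.mul_right
      (pow_dvd_pow_of_dvd ((dvd_pow_self X (by omega : m ≠ 0)).trans ih2) m) _

theorem descending_chain (i : ℕ) :
    {p | NRGen {X ^ (2 ^ (2 ^ (i + 1))) } p} ⊂
      {p : Polynomial ℤ | NRGen {X ^ (2 ^ (2 ^ i))} p} := by
  constructor
  · intro p hp
    induction hp with
    | mem hp =>
      rw [Set.mem_singleton_iff.mp hp]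
      have hX : (X : Polynomial ℤ) ^ (2 ^ (2 ^ (i + 1))) =
          (X ^ (2 ^ (2 ^ i))).comp (X ^ (2 ^ (2 ^ i))) := by
        rw [pow_comp, X_comp, ← pow_mul, ← pow_add, ← two_mul, ← pow_succ']
      rw [hX]
      exact NRGen.comp (.mem rfl) (.mem rfl)
    | zero => exact .zero
    | add _ _ ih1 ih2 => exact .add ih1 ih2
    | neg _ ih => exact .neg ih
    | comp _ _ ih1 ih2 => exact .comp ih1 ih2
  · intro hsub
    have hmem : NRGen {X ^ (2 ^ (2 ^ (i + 1)))} ((X : Polynomial ℤ) ^ (2 ^ (2 ^ i))) :=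
      hsub (.mem rfl)
    have hdvd := hmem.dvd_gen (Nat.one_le_two_pow)
    have hle := natDegree_le_of_dvd hdvd (pow_ne_zero _ X_ne_zero)
    simp only [natDegree_pow, natDegree_X, mul_one] at hle
    have : (2 : ℕ) ^ (2 ^ i) < 2 ^ (2 ^ (i + 1)) :=
      Nat.pow_lt_pow_right one_lt_two (Nat.pow_lt_pow_right one_lt_two (Nat.lt_succ_self i))
    omega
end

section
/- Let N be a (right) nearring, let F and M be nonempty subsets of N such that F ⊆ M, M is contained in the subnearring generated by F, M is closed under + and −, and f ∘ m ∈ M for all f ∈ F and m ∈ M. Then M equals the subnearring generated by F. -/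
/-- `T` is a subnearring of the (right) nearring `(N, +, mul)`. -/
def IsSubNR {N : Type*} [AddGroup N] (mul : N → N → N) (T : Set N) : Prop :=
  (0 : N) ∈ T ∧ (∀ a ∈ T, ∀ b ∈ T, a + b ∈ T) ∧ (∀ a ∈ T, -a ∈ T) ∧
    (∀ a ∈ T, ∀ b ∈ T, mul a b ∈ T)

/-- The subnearring generated by `S`: the smallest subset containing `S` that is
an additive subgroup closed under `mul`. -/
def nrGen {N : Type*} [AddGroup N] (mul : N → N → N) (S : Set N) : Set N :=
  ⋂₀ {T | S ⊆ T ∧ IsSubNR mul T}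

theorem gen_eq_of_closed {N : Type*} [AddGroup N] (mul : N → N → N)
    (hassoc : ∀ a b c : N, mul (mul a b) c = mul a (mul b c))
    (hdist : ∀ a b c : N, mul (a + b) c = mul a c + mul b c)
    (F M : Set N) (hF : F.Nonempty) (hM : M.Nonempty)
    (h1 : F ⊆ M)
    (h2 : M ⊆ nrGen mul F)
    (h3 : ∀ a ∈ M, ∀ b ∈ M, a + b ∈ M)
    (h4 : ∀ a ∈ M, ∀ b ∈ M, a - b ∈ M)
    (h5 : ∀ f ∈ F, ∀ m ∈ M, mul f m ∈ M) :
    M = nrGen mul F := by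
  obtain ⟨m0, hm0⟩ := hM
  have h0M : (0 : N) ∈ M := by simpa using h4 m0 hm0 m0 hm0
  have hnegM : ∀ a ∈ M, -a ∈ M := fun a ha => by simpa using h4 0 h0M a ha
  have hz : ∀ c : N, mul 0 c = 0 := by
    intro c
    have h := hdist 0 0 c
    rw [add_zero] at h
    exact (add_left_cancel ((add_zero (mul 0 c)).trans h)).symm
  have hneg : ∀ a c : N, mul (-a) c = -(mul a c) := by
    intro a c
    have h := hdist a (-a) c
    rw [add_neg_cancel, hz] at h
    exact eq_neg_of_add_eq_zero_right h.symm
  -- The set of elements that multiply M into M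
  set T : Set N := {x | ∀ m ∈ M, mul x m ∈ M} with hT
  have hTsub : nrGen mul F ⊆ T := by
    intro x hx
    refine hx T ⟨fun f hf m hm => h5 f hf m hm, ?_, ?_, ?_, ?_⟩
    · intro m hm; simpa [hz] using h0M
    · intro a ha b hb m hm
      rw [hdist]; exact h3 _ (ha m hm) _ (hb m hm)
    · intro a ha m hm
      rw [hneg]; exact hnegM _ (ha m hm)
    · intro a ha b hb m hm
      rw [hassoc]; exact ha _ (hb m hm)
  have hmulM : ∀ a ∈ M, ∀ b ∈ M, mul a b ∈ M := fun a ha b hb =>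
    hTsub (h2 ha) b hb
  refine Set.Subset.antisymm h2 ?_
  intro x hx
  exact hx M ⟨h1, h0M, h3, hnegM, hmulM⟩
end

section
/- Let N be a (right) nearring, let a ∈ N be right cancellable (x ∘ a = y ∘ a implies x = y), and let e be a left identity (e ∘ x = x for all x). Let F be the subnearring generated by {a} and G the subnearring generated by {a, e}. Then G = { n ∈ N : n ∘ a ∈ F }. -/
lemma subset_nrGen {N : Type*} [AddGroup N] (mul : N → N → N) (S : Set N) :
    S ⊆ nrGen mul S := fun _ hx => Set.mem_sInter.2 fun _ hT => hT.1 hx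

lemma nrGen_subset {N : Type*} [AddGroup N] (mul : N → N → N) {S T : Set N}
    (h1 : S ⊆ T) (h2 : IsSubNR mul T) : nrGen mul S ⊆ T :=
  Set.sInter_subset_of_mem ⟨h1, h2⟩

lemma isSubNR_nrGen {N : Type*} [AddGroup N] (mul : N → N → N) (S : Set N) :
    IsSubNR mul (nrGen mul S) := by
  refine ⟨?_, ?_, ?_, ?_⟩
  · exact Set.mem_sInter.2 fun T hT => hT.2.1
  · intro x hx y hy
    exact Set.mem_sInter.2 fun T hT =>
      hT.2.2.1 x (Set.mem_sInter.1 hx T hT) y (Set.mem_sInter.1 hy T hT)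
  · intro x hx
    exact Set.mem_sInter.2 fun T hT => hT.2.2.2.1 x (Set.mem_sInter.1 hx T hT)
  · intro x hx y hy
    exact Set.mem_sInter.2 fun T hT =>
      hT.2.2.2.2 x (Set.mem_sInter.1 hx T hT) y (Set.mem_sInter.1 hy T hT)

theorem gen_with_identity {N : Type*} [AddGroup N] (mul : N → N → N)
    (hassoc : ∀ a b c : N, mul (mul a b) c = mul a (mul b c))
    (hdist : ∀ a b c : N, mul (a + b) c = mul a c + mul b c)
    (a e : N)
    (hcanc : ∀ x y : N, mul x a = mul y a → x = y)
    (hid : ∀ x : N, mul e x = x) :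
    nrGen mul {a, e} = {n : N | mul n a ∈ nrGen mul {a}} := by
  set F : Set N := nrGen mul {a} with hF
  set G : Set N := nrGen mul {a, e} with hG
  obtain ⟨hF0, hFadd, hFneg, hFmul⟩ := isSubNR_nrGen mul ({a} : Set N)
  have haF : a ∈ F := subset_nrGen mul {a} rfl
  -- basic consequences of right distributivity
  have hz : ∀ x : N, mul 0 x = 0 := by
    intro x
    have h := hdist 0 0 x
    rw [add_zero] at h
    exact (left_eq_add.mp h)
  have hn : ∀ x y : N, mul (-x) y = -(mul x y) := by
    intro x y
    have h := hdist x (-x) y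
    rw [add_neg_cancel, hz] at h
    exact eq_neg_of_add_eq_zero_right h.symm
  ext n
  simp only [Set.mem_setOf_eq]
  constructor
  · -- G ⊆ {n | mul n a ∈ F}
    intro hn'
    -- the set of left multipliers of F
    have hW : IsSubNR mul {x : N | ∀ f ∈ F, mul x f ∈ F} := by
      refine ⟨?_, ?_, ?_, ?_⟩
      · intro f hf; rw [hz]; exact hF0
      · intro x hx y hy f hf
        rw [hdist]
        exact hFadd _ (hx f hf) _ (hy f hf)
      · intro x hx f hf
        rw [hn]
        exact hFneg _ (hx f hf)
      · intro x hx y hy f hf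
        rw [hassoc]
        exact hx _ (hy f hf)
    have hsub : ({a, e} : Set N) ⊆ {x : N | ∀ f ∈ F, mul x f ∈ F} := by
      intro x hx
      rcases hx with rfl | rfl
      · intro f hf; exact hFmul _ haF _ hf
      · intro f hf; rw [hid]; exact hf
    exact nrGen_subset mul hsub hW hn' a haF
  · -- {n | mul n a ∈ F} ⊆ G
    intro hn'
    have haG : a ∈ G := subset_nrGen mul {a, e} (by left; rfl)
    have heG : e ∈ G := subset_nrGen mul {a, e} (by right; rfl)
    obtain ⟨hG0, hGadd, hGneg, hGmul⟩ := isSubNR_nrGen mul ({a, e} : Set N)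
    -- M = G ∘ a is a subnearring containing a
    have hM : IsSubNR mul {m : N | ∃ g ∈ G, m = mul g a} := by
      refine ⟨⟨0, hG0, (hz a).symm⟩, ?_, ?_, ?_⟩
      · rintro x ⟨g, hg, rfl⟩ y ⟨g', hg', rfl⟩
        exact ⟨g + g', hGadd _ hg _ hg', (hdist g g' a).symm⟩
      · rintro x ⟨g, hg, rfl⟩
        exact ⟨-g, hGneg _ hg, (hn g a).symm⟩
      · rintro x ⟨g, hg, rfl⟩ y ⟨g', hg', rfl⟩
        refine ⟨mul g (mul a g'), hGmul _ hg _ (hGmul _ haG _ hg'), ?_⟩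
        rw [hassoc, hassoc, hassoc]
    have hsub : ({a} : Set N) ⊆ {m : N | ∃ g ∈ G, m = mul g a} :=
      fun x hx => by rw [hx]; exact ⟨e, heG, (hid a).symm⟩
    obtain ⟨g, hg, hga⟩ := nrGen_subset mul hsub hM hn'
    rw [hcanc n g hga]
    exact hg
end

section
/- Let N be a (right) nearring, a ∈ N right cancellable, e a left identity, and C a set of constant elements of N (elements c with c ∘ 0 = c, equivalently c ∘ x = c for all x). Let F be the subnearring generated by {a} ∪ C and G the subnearring generated by {a, e} ∪ C. Then G = { n ∈ N : n ∘ a ∈ F }. -/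
theorem gen_with_identity_and_constants {N : Type*} [AddGroup N] (mul : N → N → N)
    (hassoc : ∀ a b c : N, mul (mul a b) c = mul a (mul b c))
    (hdist : ∀ a b c : N, mul (a + b) c = mul a c + mul b c)
    (a e : N) (C : Set N)
    (hcanc : ∀ x y : N, mul x a = mul y a → x = y)
    (hid : ∀ x : N, mul e x = x)
    (hconst : ∀ c ∈ C, ∀ x : N, mul c x = c) :
    nrGen mul ({a, e} ∪ C) = {n : N | mul n a ∈ nrGen mul ({a} ∪ C)} := by
  set F := nrGen mul ({a} ∪ C) with hFdef
  set G := nrGen mul ({a, e} ∪ C) with hGdef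
  have hFsub : IsSubNR mul F := isSubNR_nrGen mul _
  have hGsub : IsSubNR mul G := isSubNR_nrGen mul _
  have haF : a ∈ F := subset_nrGen mul _ (Or.inl rfl)
  have hCF : ∀ c ∈ C, c ∈ F := fun c hc => subset_nrGen mul _ (Or.inr hc)
  have haG : a ∈ G := subset_nrGen mul _ (Or.inl (Or.inl rfl))
  have heG : e ∈ G := subset_nrGen mul _ (Or.inl (Or.inr rfl))
  have hCG : ∀ c ∈ C, c ∈ G := fun c hc => subset_nrGen mul _ (Or.inr hc)
  -- 0 * f = 0
  have hzero : ∀ f : N, mul 0 f = 0 := by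
    intro f
    have h := hdist 0 0 f
    rw [add_zero] at h
    exact (left_eq_add.mp h)
  -- (-x) * f = -(x * f)
  have hneg : ∀ x f : N, mul (-x) f = -(mul x f) := by
    intro x f
    have h := hdist (-x) x f
    rw [neg_add_cancel, hzero] at h
    exact eq_neg_of_add_eq_zero_left h.symm
  -- Forward: every element of G multiplies F into F
  have key : G ⊆ {n : N | ∀ f ∈ F, mul n f ∈ F} := by
    apply nrGen_subset
    · intro x hx
      simp only [Set.mem_union, Set.mem_insert_iff, Set.mem_singleton_iff] at hx
      rcases hx with (rfl | rfl) | hx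
      · exact fun f hf => hFsub.2.2.2 _ haF f hf
      · intro f hf; rw [hid]; exact hf
      · intro f hf; rw [hconst x hx f]; exact hCF x hx
    · refine ⟨?_, ?_, ?_, ?_⟩
      · intro f hf; rw [hzero]; exact hFsub.1
      · intro x hx y hy f hf; rw [hdist]; exact hFsub.2.1 _ (hx f hf) _ (hy f hf)
      · intro x hx f hf; rw [hneg]; exact hFsub.2.2.1 _ (hx f hf)
      · intro x hx y hy f hf; rw [hassoc]; exact hx _ (hy f hf)
  -- Reverse: F ⊆ { m * a : m ∈ G }
  have key2 : F ⊆ {f : N | ∃ m ∈ G, mul m a = f} := by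
    apply nrGen_subset
    · intro x hx
      simp only [Set.mem_union, Set.mem_singleton_iff] at hx
      rcases hx with rfl | hx
      · exact ⟨e, heG, hid _⟩
      · exact ⟨x, hCG x hx, hconst x hx a⟩
    · refine ⟨⟨0, hGsub.1, hzero a⟩, ?_, ?_, ?_⟩
      · rintro _ ⟨m, hm, rfl⟩ _ ⟨m', hm', rfl⟩
        exact ⟨m + m', hGsub.2.1 m hm m' hm', hdist m m' a⟩
      · rintro _ ⟨m, hm, rfl⟩
        exact ⟨-m, hGsub.2.2.1 m hm, hneg m a⟩
      · rintro _ ⟨m, hm, rfl⟩ _ ⟨m', hm', rfl⟩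
        refine ⟨mul m (mul a m'), hGsub.2.2.2 m hm _ (hGsub.2.2.2 a haG m' hm'), ?_⟩
        rw [hassoc m (mul a m') a, hassoc a m' a, hassoc m a (mul m' a)]
  ext n
  constructor
  · intro hn
    exact key hn a haF
  · intro hn
    obtain ⟨m, hm, hma⟩ := key2 hn
    rwa [← hcanc m n hma]
end

section
/- A polynomial p = Σᵢ cᵢxⁱ ∈ ℤ[x] lies in the subnearring of (ℤ[x], +, ∘) generated by {x², x³} if and only if c₀ = 0, c₁ = 0, and 2 divides c₅. -/
open Polynomial

namespace NRGen
variable {S : Set (Polynomial ℤ)} {p q : Polynomial ℤ}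

lemma of_eq (h : NRGen S p) (e : p = q) : NRGen S q := e ▸ h

lemma sub (hp : NRGen S p) (hq : NRGen S q) : NRGen S (p - q) :=
  (hp.add hq.neg).of_eq (by ring)

lemma nsmul (hp : NRGen S p) : ∀ n : ℕ, NRGen S ((n : ℤ[X]) * p)
  | 0 => NRGen.zero.of_eq (by simp)
  | n+1 => ((nsmul hp n).add hp).of_eq (by push_cast; ring)

lemma zsmul (hp : NRGen S p) (c : ℤ) : NRGen S ((C c) * p) := by
  rcases le_or_gt 0 c with h | h
  · lift c to ℕ using h
    exact (hp.nsmul c).of_eq (by simp)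
  · have : (0:ℤ) ≤ -c := by omega
    lift (-c) to ℕ using this with m hm
    exact ((hp.nsmul m).neg).of_eq (by
      have hc : c = -(m:ℤ) := by omega
      rw [hc, map_neg]; rw [C_eq_natCast]; ring)

end NRGen

abbrev Gen (p : ℤ[X]) : Prop := NRGen {X ^ 2, X ^ 3} p
abbrev H (n : ℕ) : Prop := Gen (X ^ n)

lemma H2 : H 2 := NRGen.mem (Or.inl rfl)
lemma H3 : H 3 := NRGen.mem (Or.inr rfl)

lemma Hmul {a b : ℕ} (ha : H a) (hb : H b) : H (a * b) :=
  (ha.comp hb).of_eq (by rw [X_pow_comp, ← pow_mul, mul_comm])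

lemma H4 : H 4 := Hmul H2 H2
lemma H6 : H 6 := Hmul H2 H3
lemma H8 : H 8 := Hmul H2 H4
lemma H9 : H 9 := Hmul H3 H3

lemma T {a b : ℕ} (ha : H a) (hb : H b) : Gen (2 * X ^ (a + b)) := by
  have h := (H2.comp (ha.add hb)).sub ((Hmul H2 ha).add (Hmul H2 hb))
  exact h.of_eq (by rw [X_pow_comp]; ring)

lemma L3 {a b : ℕ} (ha : H a) (hb : H b) :
    Gen (3 * X ^ (2*a + b) + 3 * X ^ (a + 2*b)) := by
  have h := (H3.comp (ha.add hb)).sub ((Hmul H3 ha).add (Hmul H3 hb))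
  exact h.of_eq (by rw [X_pow_comp]; ring)

lemma combine {p : ℤ[X]} (h2 : Gen (2 * p)) (h3 : Gen (3 * p)) : Gen p :=
  (h3.sub h2).of_eq (by ring)

lemma three_of (h : Gen p) : Gen (3 * p) := ((h.add h).add h).of_eq (by ring)

/-- main step: H a, H b, H (a+2b), and 2a+b = c+d with H c, H d gives H (2a+b). -/
lemma step {a b c d : ℕ} (ha : H a) (hb : H b) (hab : H (a + 2*b))
    (hc : H c) (hd : H d) (e : c + d = 2*a + b) : H (2*a + b) := by
  have h3 : Gen (3 * X ^ (2*a+b)) := ((L3 ha hb).sub (three_of hab)).of_eq (by ring)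
  have h2 : Gen (2 * X ^ (2*a+b)) := (T hc hd).of_eq (by rw [e])
  exact combine h2 h3

lemma step' {a b c d m n : ℕ} (ha : H a) (hb : H b) (hab : H m) (hc : H c) (hd : H d)
    (hm : m = a + 2*b) (hn : n = 2*a + b) (e : c + d = n) : H n := by
  subst hm hn; exact step ha hb hab hc hd e

lemma HmulE {a b n : ℕ} (ha : H a) (hb : H b) (e : n = a * b) : H n := e ▸ Hmul ha hb

lemma H12 : H 12 := HmulE H2 H6 (by norm_num)
lemma H16 : H 16 := HmulE H2 H8 (by norm_num)
lemma H18 : H 18 := HmulE H2 H9 (by norm_num)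
lemma H7 : H 7 := step' H2 H3 H8 H3 H4 (by norm_num) (by norm_num) (by norm_num)
lemma H10 : H 10 := step' H4 H2 H8 H4 H6 (by norm_num) (by norm_num) (by norm_num)
lemma H11 : H 11 := step' H2 H7 H16 H4 H7 (by norm_num) (by norm_num) (by norm_num)
lemma H14 : H 14 := HmulE H2 H7 (by norm_num)
lemma H20 : H 20 := HmulE H2 H10 (by norm_num)
lemma H21 : H 21 := HmulE H3 H7 (by norm_num)
lemma H22 : H 22 := HmulE H2 H11 (by norm_num)
lemma H13 : H 13 := step' H2 H9 H20 H6 H7 (by norm_num) (by norm_num) (by norm_num)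
lemma H15 : H 15 := step' H4 H7 H18 H7 H8 (by norm_num) (by norm_num) (by norm_num)
lemma H17 : H 17 := step' H7 H3 H13 H8 H9 (by norm_num) (by norm_num) (by norm_num)
lemma H19 : H 19 := step' H6 H7 H20 H9 H10 (by norm_num) (by norm_num) (by norm_num)
lemma H23 : H 23 := step' H8 H7 H22 H11 H12 (by norm_num) (by norm_num) (by norm_num)

lemma Hpow : ∀ n : ℕ, 2 ≤ n → n ≠ 5 → H n := by
  intro n
  induction n using Nat.strong_induction_on with
  | _ n ih =>
    intro hn2 hn5
    rcases Nat.lt_or_ge n 24 with h | h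
    · interval_cases n
      exacts [H2, H3, H4, absurd rfl hn5, H6, H7, H8, H9, H10, H11, H12, H13, H14,
        H15, H16, H17, H18, H19, H20, H21, H22, H23]
    · obtain ⟨a, b, hab, ha6, hb6, habl, habn⟩ :
        ∃ a b, n = 2*a + b ∧ 6 ≤ a ∧ 6 ≤ b ∧ 6 ≤ a + 2*b ∧ a + 2*b < n := by
        rcases (show n % 3 = 0 ∨ n % 3 = 1 ∨ n % 3 = 2 by omega) with h0 | h1 | h2
        · exact ⟨n/3 + 1, n/3 - 2, by omega, by omega, by omega, by omega, by omega⟩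
        · exact ⟨(n+2)/3, (n+2)/3 - 2, by omega, by omega, by omega, by omega, by omega⟩
        · exact ⟨(n+1)/3, (n+1)/3 - 1, by omega, by omega, by omega, by omega, by omega⟩
      exact step' (ih a (by omega) (by omega) (by omega))
        (ih b (by omega) (by omega) (by omega))
        (ih (a + 2*b) (by omega) (by omega) (by omega))
        H2 (ih (n-2) (by omega) (by omega) (by omega))
        rfl hab (by omega)

lemma two_X5 : Gen (2 * X ^ 5) := (T H2 H3).of_eq (by norm_num)

lemma mono {n : ℕ} {c : ℤ} (h : 2 ≤ n) (h5 : n = 5 → 2 ∣ c) : Gen (C c * X ^ n) := by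
  by_cases hn : n = 5
  · subst hn
    obtain ⟨k, rfl⟩ := h5 rfl
    exact (two_X5.zsmul k).of_eq (by rw [map_mul, show (C 2 : ℤ[X]) = 2 from rfl]; ring)
  · exact (Hpow n h hn).zsmul c

lemma reverse {p : ℤ[X]} (h0 : p.coeff 0 = 0) (h1 : p.coeff 1 = 0)
    (h5 : 2 ∣ p.coeff 5) : Gen p := by
  have hrep := Polynomial.as_sum_range' p (p.natDegree + 1) (Nat.lt_succ_self _)
  have : Gen (∑ i ∈ Finset.range (p.natDegree + 1), (monomial i) (p.coeff i)) := by
    apply Finset.sum_induction _ (fun r : ℤ[X] => Gen r) (fun a b => NRGen.add) NRGen.zero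
    intro i _
    rw [← C_mul_X_pow_eq_monomial]
    match i with
    | 0 => rw [h0]; exact NRGen.zero.of_eq (by simp)
    | 1 => rw [h1]; exact NRGen.zero.of_eq (by simp)
    | (m+2) => exact mono (by omega) (fun he => by rw [show m + 2 = 5 from he]; exact h5)
  exact this.of_eq hrep.symm

lemma coeff5_sq {q : ℤ[X]} (h0 : q.coeff 0 = 0) (h1 : q.coeff 1 = 0) :
    (q ^ 2).coeff 5 = q.coeff 2 * q.coeff 3 + q.coeff 3 * q.coeff 2 := by
  rw [sq, coeff_mul, Finset.Nat.sum_antidiagonal_eq_sum_range_succ_mk]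
  simp [Finset.sum_range_succ, h0, h1]

lemma comp_ok {p q : ℤ[X]}
    (hp0 : p.coeff 0 = 0) (hp1 : p.coeff 1 = 0) (hp5 : 2 ∣ p.coeff 5)
    (hq0 : q.coeff 0 = 0) (hq1 : q.coeff 1 = 0) (hq5 : 2 ∣ q.coeff 5) :
    (p.comp q).coeff 0 = 0 ∧ (p.comp q).coeff 1 = 0 ∧ 2 ∣ (p.comp q).coeff 5 := by
  have hq00 : q.eval 0 = 0 := by rw [← coeff_zero_eq_eval_zero]; exact hq0
  refine ⟨?_, ?_, ?_⟩
  · rw [coeff_zero_eq_eval_zero, eval_comp, hq00, ← coeff_zero_eq_eval_zero, hp0]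
  · have hd : ((derivative (p.comp q)).coeff 0) = (p.comp q).coeff 1 := by
      rw [coeff_derivative]; push_cast; ring
    rw [← hd, derivative_comp, coeff_zero_eq_eval_zero, eval_mul, eval_comp, hq00,
      ← coeff_zero_eq_eval_zero, ← coeff_zero_eq_eval_zero, coeff_derivative,
      coeff_derivative, hq1, hp1]
    ring
  · have hX2 : (X : ℤ[X]) ^ 2 ∣ q := by
      rw [Polynomial.X_pow_dvd_iff]
      intro d hd
      interval_cases d
      exacts [hq0, hq1]
    rw [comp_eq_sum_left, Polynomial.sum, finset_sum_coeff]
    apply Finset.dvd_sum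
    intro i _
    rw [coeff_C_mul]
    match i with
    | 0 => rw [hp0]; simp
    | 1 => rw [hp1]; simp
    | 2 => rw [coeff5_sq hq0 hq1]; exact Dvd.dvd.mul_left ⟨q.coeff 2 * q.coeff 3, by ring⟩ _
    | (m+3) =>
      have hdvd : (X : ℤ[X]) ^ (2 * (m + 3)) ∣ q ^ (m + 3) := by
        rw [pow_mul]; exact pow_dvd_pow_of_dvd hX2 _
      rw [(Polynomial.X_pow_dvd_iff.mp hdvd) 5 (by omega)]
      simp

theorem mem_gen_x2_x3 (p : Polynomial ℤ) :
    NRGen {X ^ 2, X ^ 3} p ↔ p.coeff 0 = 0 ∧ p.coeff 1 = 0 ∧ 2 ∣ p.coeff 5 := by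
  constructor
  · intro h
    induction h with
    | mem hp =>
      rcases hp with rfl | rfl <;>
        simp [coeff_X_pow]
    | zero => simp
    | add hp hq ihp ihq =>
      obtain ⟨a0, a1, a5⟩ := ihp; obtain ⟨b0, b1, b5⟩ := ihq
      exact ⟨by simp [a0, b0], by simp [a1, b1], by simpa using dvd_add a5 b5⟩
    | neg hp ihp =>
      obtain ⟨a0, a1, a5⟩ := ihp
      exact ⟨by simp [a0], by simp [a1], by simpa using a5.neg_right⟩
    | comp hp hq ihp ihq =>
      exact comp_ok ihp.1 ihp.2.1 ihp.2.2 ihq.1 ihq.2.1 ihq.2.2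
  · rintro ⟨h0, h1, h5⟩
    exact reverse h0 h1 h5
end

section
/- A polynomial p = Σᵢ cᵢxⁱ ∈ ℤ[x] lies in the subnearring of (ℤ[x], +, ∘) generated by {x, x², x³} if and only if c₀ = 0. -/
open Polynomial

private lemma NRGen.nsmul_s9 {S : Set (Polynomial ℤ)} {p : Polynomial ℤ}
    (h : NRGen S p) (n : ℕ) : NRGen S (n • p) := by
  induction n with
  | zero => simpa using NRGen.zero
  | succ k ih => rw [succ_nsmul]; exact ih.add h

private lemma NRGen.zsmul_s9 {S : Set (Polynomial ℤ)} {p : Polynomial ℤ}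
    (h : NRGen S p) (n : ℤ) : NRGen S (n • p) := by
  cases n with
  | ofNat k => simpa using h.nsmul_s9 k
  | negSucc k => rw [negSucc_zsmul]; exact (h.nsmul_s9 (k+1)).neg

private lemma gen_pow (n : ℕ) (hn : 1 ≤ n) :
    NRGen ({X, X ^ 2, X ^ 3} : Set (Polynomial ℤ)) (X ^ n) := by
  set S : Set (Polynomial ℤ) := {X, X ^ 2, X ^ 3} with hS
  have hx1 : NRGen S X := .mem (by simp [hS])
  have hx2 : NRGen S (X ^ 2) := .mem (by simp [hS])
  have hx3 : NRGen S (X ^ 3) := .mem (by simp [hS])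
  induction n using Nat.strong_induction_on with
  | _ n ih =>
  rcases lt_or_ge n 4 with h4 | h4
  · interval_cases n
    · simpa using hx1
    · exact hx2
    · exact hx3
  · rcases Nat.even_or_odd n with ⟨m, hm⟩ | ⟨m, hm⟩
    · -- n = m + m, even, m ≥ 2
      have hmn : m < n := by omega
      have hm1 : 1 ≤ m := by omega
      have h := (ih m hmn hm1).comp hx2
      have : (X ^ m : Polynomial ℤ).comp (X ^ 2) = X ^ n := by
        rw [X_pow_comp, ← pow_mul]; congr 1; omega
      rwa [this] at h
    · -- n = 2*m+1, odd, m ≥ 2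
      have hm2 : 2 ≤ m := by omega
      have hXm : NRGen S (X ^ m) := ih m (by omega) (by omega)
      have hXm2 : NRGen S (X ^ (m + 2)) := ih (m + 2) (by omega) (by omega)
      have hX3m : NRGen S (X ^ (3 * m)) := by
        have h := hXm.comp hx3
        rwa [X_pow_comp, ← pow_mul] at h
      have hX2m : NRGen S (X ^ (2 * m)) := by
        have h := hXm.comp hx2
        rwa [X_pow_comp, ← pow_mul] at h
      have hX4m : NRGen S (X ^ (4 * m)) := by
        have h := hX2m.comp hx2
        rw [X_pow_comp, ← pow_mul] at h
        rw [show 4 * m = 2 * (2 * m) from by omega]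
        exact h
      -- 3 X^n
      have h3 : NRGen S (X ^ n + X ^ n + X ^ n) := by
        have h := ((hx3.comp (hXm.add hx1)).add
          (hX3m.neg.add ((hXm2.add (hXm2.add hXm2)).neg.add hx3.neg)))
        have heq : (X ^ 3 : Polynomial ℤ).comp (X ^ m + X) +
            (-(X ^ (3 * m)) + (-(X ^ (m + 2) + (X ^ (m + 2) + X ^ (m + 2))) + -(X ^ 3)))
            = X ^ n + X ^ n + X ^ n := by
          rw [X_pow_comp, hm]
          ring
        rwa [heq] at h
      -- 2 X^n
      have h2 : NRGen S (X ^ n + X ^ n) := by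
        have h := (hx2.comp (hX2m.add hx1)).add (hX4m.neg.add hx2.neg)
        have heq : (X ^ 2 : Polynomial ℤ).comp (X ^ (2 * m) + X) +
            (-(X ^ (4 * m)) + -(X ^ 2)) = X ^ n + X ^ n := by
          rw [X_pow_comp, hm]
          ring
        rwa [heq] at h
      have h := h3.add h2.neg
      have heq : (X ^ n + X ^ n + X ^ n : Polynomial ℤ) + -(X ^ n + X ^ n) = X ^ n := by
        ring
      rwa [heq] at h

theorem mem_gen_x_x2_x3 (p : Polynomial ℤ) :
    NRGen {X, X ^ 2, X ^ 3} p ↔ p.coeff 0 = 0 := by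
  constructor
  · intro h
    induction h with
    | mem hp =>
      rcases hp with h | h | h <;> subst h <;> simp
    | zero => simp
    | add _ _ hp hq => simp [coeff_add, hp, hq]
    | neg _ hp => simp [hp]
    | comp _ _ hp hq =>
      rw [coeff_zero_eq_eval_zero, eval_comp, ← coeff_zero_eq_eval_zero, hq,
        ← coeff_zero_eq_eval_zero, hp]
  · intro h0
    have key : ∀ q : Polynomial ℤ, NRGen {X, X ^ 2, X ^ 3} (q - C (q.coeff 0)) := by
      intro q
      induction q using Polynomial.induction_on with
      | C a => simpa using NRGen.zero
      | add p q hp hq =>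
        have h := hp.add hq
        have heq : p - C (p.coeff 0) + (q - C (q.coeff 0))
            = p + q - C ((p + q).coeff 0) := by
          rw [coeff_add, C_add]; ring
        rwa [heq] at h
      | monomial n a _ =>
        have h := (gen_pow (n + 1) (by omega)).zsmul_s9 a
        have heq : (a : ℤ) • (X ^ (n + 1) : Polynomial ℤ)
            = C a * X ^ (n + 1) - C ((C a * X ^ (n + 1)).coeff 0) := by
          simp [zsmul_eq_mul, coeff_X_pow, C_eq_intCast]
        rwa [heq] at h
    have h := key p
    rwa [h0, C_0, sub_zero] at h
end

section
/- A polynomial p = Σᵢ cᵢxⁱ ∈ ℤ[x] lies in the subnearring of (ℤ[x], +, ∘) generated by {1, x², x³} if and only if c₁ = 0 and 2 divides c₅. -/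
open Polynomial

open Finset

section Fwd

variable {R : Type*} [CommRing R]

private lemma antid1 : antidiagonal 1 = ({(0,1),(1,0)} : Finset (ℕ×ℕ)) := by decide
private lemma antid2 : antidiagonal 2 = ({(0,2),(1,1),(2,0)} : Finset (ℕ×ℕ)) := by decide
private lemma antid3 : antidiagonal 3 = ({(0,3),(1,2),(2,1),(3,0)} : Finset (ℕ×ℕ)) := by decide
private lemma antid5 : antidiagonal 5 = ({(0,5),(1,4),(2,3),(3,2),(4,1),(5,0)} : Finset (ℕ×ℕ)) := by decide

private lemma coeff0_pow (q : R[X]) (k : ℕ) : (q^k).coeff 0 = (q.coeff 0)^k := by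
  induction k with
  | zero => simp
  | succ k ih => rw [pow_succ, mul_coeff_zero, ih, pow_succ]

private lemma coeff1_pow (q : R[X]) (h : q.coeff 1 = 0) (k : ℕ) : (q^k).coeff 1 = 0 := by
  induction k with
  | zero => simp [coeff_one]
  | succ k ih => rw [pow_succ, coeff_mul, antid1]; simp [h, ih]

private lemma coeff5_pow (q : R[X]) (h2 : (2:R) = 0) (h1 : q.coeff 1 = 0)
    (h5 : q.coeff 5 = 0) (k : ℕ) : (q^k).coeff 5 = 0 := by
  suffices H : ∀ k : ℕ, ∃ u : R, (q^k).coeff 2 = u * q.coeff 2 ∧ (q^k).coeff 3 = u * q.coeff 3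
      ∧ (q^k).coeff 5 = 0 by
    obtain ⟨u, _, _, h⟩ := H k; exact h
  intro k
  induction k with
  | zero => exact ⟨0, by simp [coeff_one]⟩
  | succ k ih =>
    obtain ⟨u, hu2, hu3, hu5⟩ := ih
    refine ⟨(q.coeff 0)^k + u * q.coeff 0, ?_, ?_, ?_⟩
    · rw [pow_succ, coeff_mul, antid2]
      simp [coeff0_pow, coeff1_pow q h1, h1, hu2]
      ring
    · rw [pow_succ, coeff_mul, antid3]
      simp [coeff0_pow, coeff1_pow q h1, h1, hu3, hu2]
      ring
    · rw [pow_succ, coeff_mul, antid5]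
      simp [coeff0_pow, coeff1_pow q h1, h1, h5, hu5, hu2, hu3]
      calc u * q.coeff 2 * q.coeff 3 + u * q.coeff 3 * q.coeff 2
          = 2 * (u * q.coeff 2 * q.coeff 3) := by ring
        _ = 0 := by rw [h2, zero_mul]

private lemma coeff_comp_eq_sum (p q : R[X]) (n : ℕ) :
    (p.comp q).coeff n = p.sum fun k a => a * (q^k).coeff n := by
  rw [comp, eval₂_eq_sum, Polynomial.sum, Polynomial.sum, finset_sum_coeff]
  refine Finset.sum_congr rfl fun i _ => ?_
  rw [coeff_C_mul]

private lemma coeff1_comp (p q : R[X]) (h : q.coeff 1 = 0) : (p.comp q).coeff 1 = 0 := by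
  rw [coeff_comp_eq_sum]
  refine Finset.sum_eq_zero fun i _ => ?_
  simp only []
  rw [coeff1_pow q h, mul_zero]

private lemma coeff5_comp (p q : R[X]) (h2 : (2:R) = 0) (h1 : q.coeff 1 = 0)
    (h5 : q.coeff 5 = 0) : (p.comp q).coeff 5 = 0 := by
  rw [coeff_comp_eq_sum]
  refine Finset.sum_eq_zero fun i _ => ?_
  simp only []
  rw [coeff5_pow q h2 h1 h5, mul_zero]

end Fwd

section Bwd

private abbrev G : Polynomial ℤ → Prop := NRGen {1, X ^ 2, X ^ 3}

private lemma g_one : G 1 := .mem (by simp)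
private lemma gX2 : G (X^2) := .mem (by simp)
private lemma gX3 : G (X^3) := .mem (by simp)

private lemma g_sub {p q : Polynomial ℤ} (hp : G p) (hq : G q) : G (p - q) := by
  rw [sub_eq_add_neg]; exact .add hp (.neg hq)

private lemma g_sq {q : Polynomial ℤ} (hq : G q) : G (q^2) := by
  have := NRGen.comp gX2 hq; rwa [X_pow_comp] at this

private lemma g_cube {q : Polynomial ℤ} (hq : G q) : G (q^3) := by
  have := NRGen.comp gX3 hq; rwa [X_pow_comp] at this

private lemma g_two {q : Polynomial ℤ} (hq : G q) : G (2*q) := by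
  have h : G ((q+1)^2 - q^2 - 1) := g_sub (g_sub (g_sq (.add hq g_one)) (g_sq hq)) g_one
  have e : (q+1)^2 - q^2 - 1 = 2*q := by ring
  rwa [e] at h

private lemma g_two_mul {p q : Polynomial ℤ} (hp : G p) (hq : G q) : G (2*(p*q)) := by
  have h : G ((p+q)^2 - p^2 - q^2) := g_sub (g_sub (g_sq (.add hp hq)) (g_sq hp)) (g_sq hq)
  have e : (p+q)^2 - p^2 - q^2 = 2*(p*q) := by ring
  rwa [e] at h

private lemma g_int_mul (c : ℤ) {q : Polynomial ℤ} (hq : G q) : G (C c * q) := by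
  induction c using Int.induction_on with
  | zero => rw [map_zero, zero_mul]; exact .zero
  | succ n ih => rw [show ((n:ℤ)+1) = (n+1 : ℤ) from rfl]
                 rw [map_add, add_mul, map_one, one_mul]
                 exact .add (by exact_mod_cast ih) hq
  | pred n ih => rw [map_sub, sub_mul, map_one, one_mul]
                 exact g_sub (by exact_mod_cast ih) hq

private lemma gXpow_mul {a : ℕ} (ha : G (X^a)) : G (X^(2*a)) ∧ G (X^(3*a)) := by
  constructor
  · have := g_sq ha; rwa [← pow_mul, Nat.mul_comm] at this
  · have := g_cube ha; rwa [← pow_mul, Nat.mul_comm] at this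

private lemma g_rule {a b s t : ℕ} (ha : G (X^a)) (hb : G (X^b)) (hc : G (X^(a+2*b)))
    (hs : G (X^s)) (ht : G (X^t)) (hst : s + t = 2*a+b) : G (X^(2*a+b)) := by
  have h3 : G ((3:Polynomial ℤ) * X^(2*a+b)) := by
    have hcomp : G ((X^a + X^b)^3) := by
      have := NRGen.comp gX3 (.add ha hb); rwa [X_pow_comp] at this
    have h3a : G ((X^a)^3) := g_cube ha
    have h3b : G ((X^b)^3) := g_cube hb
    have h2c : G (2 * X^(a+2*b)) := by have := g_two hc; simpa using this
    have h := g_sub (g_sub (g_sub hcomp h3a) h3b) (.add hc h2c)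
    have e : ((X:Polynomial ℤ)^a + X^b)^3 - (X^a)^3 - (X^b)^3 - (X^(a+2*b) + 2*X^(a+2*b))
        = (3:Polynomial ℤ) * X^(2*a+b) := by
      have e1 : (X : Polynomial ℤ)^(a+2*b) = X^a * (X^b)^2 := by
        rw [← pow_mul, ← pow_add]; ring_nf
      have e2 : (X : Polynomial ℤ)^(2*a+b) = (X^a)^2 * X^b := by
        rw [← pow_mul, ← pow_add]; ring_nf
      rw [e1, e2]; ring
    rwa [e] at h
  have h2 : G (2 * X^(2*a+b)) := by
    have := g_two_mul hs ht
    rwa [← pow_add, hst] at this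
  have h := g_sub h3 h2
  have e : (3:Polynomial ℤ) * X^(2*a+b) - 2 * X^(2*a+b) = X^(2*a+b) := by ring
  rwa [e] at h

private lemma g4 : G (X^4) := (gXpow_mul gX2).1
private lemma g6 : G (X^6) := (gXpow_mul gX3).1
private lemma g8 : G (X^8) := by have := (gXpow_mul g4).1; norm_num at this ⊢; exact this
private lemma g16 : G (X^16) := by have := (gXpow_mul g8).1; norm_num at this ⊢; exact this
private lemma g9 : G (X^9) := by have := (gXpow_mul gX3).2; norm_num at this ⊢; exact this
private lemma g7 : G (X^7) := by
  have := g_rule (a:=2) (b:=3) (s:=3) (t:=4) gX2 gX3 g8 gX3 g4 (by norm_num)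
  norm_num at this ⊢; exact this
private lemma g11 : G (X^11) := by
  have := g_rule (a:=2) (b:=7) (s:=2) (t:=9) gX2 g7 g16 gX2 g9 (by norm_num)
  norm_num at this ⊢; exact this
private lemma g10 : G (X^10) := by
  have := g_rule (a:=3) (b:=4) (s:=4) (t:=6) gX3 g4 g11 g4 g6 (by norm_num)
  norm_num at this ⊢; exact this
private lemma g20 : G (X^20) := by have := (gXpow_mul g10).1; norm_num at this ⊢; exact this
private lemma g13 : G (X^13) := by
  have := g_rule (a:=2) (b:=9) (s:=4) (t:=9) gX2 g9 g20 g4 g9 (by norm_num)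
  norm_num at this ⊢; exact this

private lemma g_pow (n : ℕ) (h1 : n ≠ 1) (h5 : n ≠ 5) : G (X^n) := by
  induction n using Nat.strong_induction_on with
  | _ n ih =>
    match n, h1, h5 with
    | 0, _, _ => simpa using g_one
    | 2, _, _ => exact gX2
    | 3, _, _ => exact gX3
    | 4, _, _ => exact g4
    | 6, _, _ => exact g6
    | 7, _, _ => exact g7
    | 8, _, _ => exact g8
    | 9, _, _ => exact g9
    | 10, _, _ => exact g10
    | 11, _, _ => exact g11
    | 12, _, _ => exact (gXpow_mul (ih 6 (by norm_num) (by norm_num) (by norm_num))).1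
    | 13, _, _ => exact g13
    | (n+14), _, _ =>
      rcases Nat.even_or_odd (n+14) with he | ho
      · obtain ⟨m, hm⟩ := he
        have hm2 : n + 14 = 2 * m := by omega
        have : G (X^m) := ih m (by omega) (by omega) (by omega)
        rw [hm2]; exact (gXpow_mul this).1
      · obtain ⟨m, hm⟩ := ho
        -- n+14 = 2m+1, m ≥ 7 ; write as 2*a+3 with a = m-1 ≥ 6
        have hm2 : n + 14 = 2 * (m-1) + 3 := by omega
        rw [hm2]
        refine g_rule (b:=3) (s:=m-1) (t:=m+2) ?_ gX3 ?_ ?_ ?_ (by omega)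
        · exact ih (m-1) (by omega) (by omega) (by omega)
        · have : m - 1 + 2*3 = m + 5 := by omega
          rw [this]; exact ih (m+5) (by omega) (by omega) (by omega)
        · exact ih (m-1) (by omega) (by omega) (by omega)
        · exact ih (m+2) (by omega) (by omega) (by omega)

private lemma g_2X5 : G (C 2 * X^5) := by
  have := g_two_mul gX2 gX3
  have e : 2 * ((X:Polynomial ℤ)^2 * X^3) = C 2 * X^5 := by
    rw [← pow_add]; push_cast; norm_num
  rwa [e] at this

private lemma g_monomial (n : ℕ) (c : ℤ) (h1 : n = 1 → c = 0) (h5 : n = 5 → 2 ∣ c) :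
    G (C c * X^n) := by
  by_cases hn1 : n = 1
  · rw [h1 hn1, map_zero, zero_mul]; exact .zero
  by_cases hn5 : n = 5
  · obtain ⟨d, hd⟩ := h5 hn5
    subst hn5 hd
    have := g_int_mul d g_2X5
    rwa [← mul_assoc, ← map_mul, mul_comm d 2] at this
  · exact g_int_mul c (g_pow n hn1 hn5)

end Bwd

theorem mem_gen_1_x2_x3 (p : Polynomial ℤ) :
    NRGen {1, X ^ 2, X ^ 3} p ↔ p.coeff 1 = 0 ∧ 2 ∣ p.coeff 5 := by
  constructor
  · intro hp
    induction hp with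
    | mem h =>
      rcases h with h | h | h <;> subst h <;>
        simp [coeff_one, coeff_X_pow]
    | zero => simp
    | add hp hq ihp ihq =>
      obtain ⟨h1, h5⟩ := ihp; obtain ⟨g1, g5⟩ := ihq
      exact ⟨by simp [h1, g1], by simpa using dvd_add h5 g5⟩
    | neg hp ihp =>
      obtain ⟨h1, h5⟩ := ihp
      exact ⟨by simp [h1], by simpa using h5.neg_right⟩
    | comp hp hq ihp ihq =>
      rename_i p' q'
      obtain ⟨g1, g5⟩ := ihq
      refine ⟨coeff1_comp _ _ g1, ?_⟩
      have hq5 : ((q'.coeff 5 : ℤ) : ZMod 2) = 0 := by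
        rw [ZMod.intCast_zmod_eq_zero_iff_dvd]; exact_mod_cast g5
      have hmap := coeff5_comp (p'.map (Int.castRingHom (ZMod 2)))
        (q'.map (Int.castRingHom (ZMod 2))) (by decide)
        (by rw [coeff_map]; simp [g1])
        (by rw [coeff_map]; exact hq5)
      rw [← Polynomial.map_comp, coeff_map] at hmap
      have h := (ZMod.intCast_zmod_eq_zero_iff_dvd _ 2).mp hmap
      exact_mod_cast h
  · rintro ⟨h1, h5⟩
    have hsum := p.as_sum_support
    rw [hsum]
    refine Finset.sum_induction _ G (fun a b => .add) .zero ?_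
    intro n hn
    rw [← C_mul_X_pow_eq_monomial]
    exact g_monomial n (p.coeff n) (fun h => by rw [h] at *; exact h1)
      (fun h => by rw [h] at *; exact h5)
end

section
/- A polynomial p = Σᵢ cᵢxⁱ ∈ ℤ[x] lies in the subnearring of (ℤ[x], +, ∘) generated by {x²} if and only if c₀ = 0, all odd-indexed coefficients vanish, and for every i ≥ 1, 2^(s₂(i)−1) divides c_{2i}, where s₂(i) is the binary digit sum of i. -/
open Polynomial

private def s2 (n : ℕ) : ℕ := (Nat.digits 2 n).sum

private lemma s2_one : s2 1 = 1 := by simp [s2]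

private lemma s2_two_mul (n : ℕ) : s2 (2 * n) = s2 n := by
  rcases Nat.eq_zero_or_pos n with h | h
  · simp [h, s2]
  · unfold s2
    rw [Nat.digits_def' (by norm_num : 1 < 2) (by omega)]
    simp [Nat.mul_div_cancel_left _ (by norm_num : 0 < 2), Nat.mul_mod_right]

private lemma s2_two_mul_add_one (n : ℕ) : s2 (2 * n + 1) = s2 n + 1 := by
  unfold s2
  rw [Nat.digits_def' (by norm_num : 1 < 2) (by omega)]
  have h1 : (2 * n + 1) % 2 = 1 := by omega
  have h2 : (2 * n + 1) / 2 = n := by omega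
  rw [h1, h2]
  simp [Nat.add_comm]

private lemma s2_pos : ∀ n : ℕ, 1 ≤ n → 1 ≤ s2 n := by
  intro n
  induction n using Nat.strong_induction_on with
  | _ n ih =>
    intro hn
    rcases Nat.even_or_odd n with ⟨k, hk⟩ | ⟨k, hk⟩
    · have e : n = 2 * k := by omega
      rw [e, s2_two_mul]
      exact ih k (by omega) (by omega)
    · rw [hk, s2_two_mul_add_one]
      omega

private lemma s2_add_le_aux : ∀ N a b : ℕ, a + b ≤ N → s2 (a + b) ≤ s2 a + s2 b := by
  intro N
  induction N with
  | zero => intro a b h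
            have : a = 0 ∧ b = 0 := by omega
            simp [this.1, this.2]
  | succ N ih =>
    intro a b hab
    rcases Nat.eq_zero_or_pos a with ha | ha
    · simp [ha]
    rcases Nat.eq_zero_or_pos b with hb | hb
    · simp [hb]
    have hN : 1 ≤ N := by omega
    rcases Nat.even_or_odd a with ⟨a', ha'⟩ | ⟨a', ha'⟩ <;>
      rcases Nat.even_or_odd b with ⟨b', hb'⟩ | ⟨b', hb'⟩
    · -- both even
      have e1 : a = 2 * a' := by omega
      have e2 : b = 2 * b' := by omega
      have e3 : 2 * a' + 2 * b' = 2 * (a' + b') := by ring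
      rw [e1, e2, e3, s2_two_mul, s2_two_mul, s2_two_mul]
      exact ih a' b' (by omega)
    · -- a even, b odd
      have e1 : a = 2 * a' := by omega
      have e2 : b = 2 * b' + 1 := by omega
      have e3 : 2 * a' + (2 * b' + 1) = 2 * (a' + b') + 1 := by ring
      rw [e1, e2, e3, s2_two_mul, s2_two_mul_add_one, s2_two_mul_add_one]
      have := ih a' b' (by omega)
      omega
    · -- a odd, b even
      have e1 : a = 2 * a' + 1 := by omega
      have e2 : b = 2 * b' := by omega
      have e3 : 2 * a' + 1 + 2 * b' = 2 * (a' + b') + 1 := by ring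
      rw [e1, e2, e3, s2_two_mul, s2_two_mul_add_one, s2_two_mul_add_one]
      have := ih a' b' (by omega)
      omega
    · -- both odd
      have e1 : a = 2 * a' + 1 := by omega
      have e2 : b = 2 * b' + 1 := by omega
      have e3 : 2 * a' + 1 + (2 * b' + 1) = 2 * (a' + b' + 1) := by ring
      rw [e1, e2, e3, s2_two_mul, s2_two_mul_add_one, s2_two_mul_add_one]
      have h1 : s2 (a' + b' + 1) ≤ s2 (a' + b') + s2 1 := ih (a' + b') 1 (by omega)
      have h2 : s2 (a' + b') ≤ s2 a' + s2 b' := ih a' b' (by omega)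
      have h3 : s2 1 = 1 := by simp [s2]
      omega

private lemma s2_add_le (a b : ℕ) : s2 (a + b) ≤ s2 a + s2 b :=
  s2_add_le_aux (a + b) a b le_rfl

private def InT (p : Polynomial ℤ) : Prop :=
  p.coeff 0 = 0 ∧ (∀ i : ℕ, p.coeff (2 * i + 1) = 0) ∧
    ∀ i : ℕ, 1 ≤ i → (2 : ℤ) ^ (s2 i - 1) ∣ p.coeff (2 * i)

private lemma InT_zero : InT 0 := by
  refine ⟨rfl, fun i => rfl, fun i _ => by simp⟩

private lemma InT_add {p q : Polynomial ℤ} (hp : InT p) (hq : InT q) : InT (p + q) := by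
  obtain ⟨h1, h2, h3⟩ := hp
  obtain ⟨g1, g2, g3⟩ := hq
  exact ⟨by simp [h1, g1], fun i => by simp [h2 i, g2 i],
    fun i hi => by simpa using dvd_add (h3 i hi) (g3 i hi)⟩

private lemma InT_neg {p : Polynomial ℤ} (hp : InT p) : InT (-p) := by
  obtain ⟨h1, h2, h3⟩ := hp
  exact ⟨by simp [h1], fun i => by simp [h2 i], fun i hi => by simpa using (h3 i hi).neg_right⟩

private lemma InT_Cmul {p : Polynomial ℤ} (d : ℤ) (hp : InT p) : InT (C d * p) := by
  obtain ⟨h1, h2, h3⟩ := hp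
  exact ⟨by simp [h1], fun i => by simp [h2 i],
    fun i hi => by simpa using Dvd.dvd.mul_left (h3 i hi) d⟩

private lemma coeff_odd {p : Polynomial ℤ} (hp : InT p) {k : ℕ} (hk : ¬ 2 ∣ k) :
    p.coeff k = 0 := by
  obtain ⟨j, hj⟩ : ∃ j, k = 2 * j + 1 := ⟨k / 2, by omega⟩
  rw [hj]; exact hp.2.1 j

private lemma InT_sq {p : Polynomial ℤ} (hp : InT p) : InT (p * p) := by
  obtain ⟨h1, h2, h3⟩ := hp
  refine ⟨by simp [mul_coeff_zero, h1], ?_, ?_⟩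
  · -- odd coefficients vanish
    intro m
    rw [coeff_mul]
    refine Finset.sum_eq_zero fun x hx => ?_
    rw [Finset.HasAntidiagonal.mem_antidiagonal] at hx
    rcases Nat.even_or_odd x.1 with hx1 | hx1
    · have : ¬ 2 ∣ x.2 := by rcases hx1 with ⟨t, ht⟩; omega
      rw [coeff_odd ⟨h1, h2, h3⟩ this, mul_zero]
    · have : ¬ 2 ∣ x.1 := by rcases hx1 with ⟨t, ht⟩; omega
      rw [coeff_odd ⟨h1, h2, h3⟩ this, zero_mul]
  · intro n hn
    rw [coeff_mul]
    set A := Finset.HasAntidiagonal.antidiagonal (2 * n) with hA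
    set F : ℕ × ℕ → ℤ := fun x => p.coeff x.1 * p.coeff x.2 with hF
    -- per-term divisibility for strictly ordered pairs (doubled)
    have hterm : ∀ x ∈ A.filter (fun x => x.1 < x.2), (2:ℤ) ^ (s2 n - 1) ∣ 2 * F x := by
      intro x hx
      rw [Finset.mem_filter, Finset.HasAntidiagonal.mem_antidiagonal] at hx
      obtain ⟨hsum, hlt⟩ := hx
      rcases Nat.even_or_odd x.1 with ⟨i, hi⟩ | hodd
      · rcases Nat.even_or_odd x.2 with ⟨j, hj⟩ | hodd2
        · -- both even
          have e1 : x.1 = 2 * i := by omega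
          have e2 : x.2 = 2 * j := by omega
          rcases Nat.eq_zero_or_pos i with hi0 | hi0
          · have : p.coeff x.1 = 0 := by rw [e1, hi0]; simpa using h1
            simp [hF, this]
          have hj0 : 1 ≤ j := by omega
          have hij : i + j = n := by omega
          obtain ⟨d1, hd1⟩ := h3 i hi0
          obtain ⟨d2, hd2⟩ := h3 j hj0
          have key : 2 * F x = (2:ℤ) ^ (s2 i - 1 + (s2 j - 1) + 1) * (d1 * d2) := by
            simp only [hF, e1, e2, hd1, hd2]
            rw [pow_add, pow_add]
            ring
          rw [key]
          refine Dvd.dvd.mul_right (pow_dvd_pow 2 ?_) _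
          have hsub := s2_add_le i j
          rw [hij] at hsub
          have h2i := s2_pos i hi0
          have h2j := s2_pos j hj0
          omega
        · have : p.coeff x.2 = 0 := coeff_odd ⟨h1, h2, h3⟩ (by rcases hodd2 with ⟨t, ht⟩; omega)
          simp [hF, this]
      · have : p.coeff x.1 = 0 := coeff_odd ⟨h1, h2, h3⟩ (by rcases hodd with ⟨t, ht⟩; omega)
        simp [hF, this]
    -- diagonal terms
    have hdiag : ∀ x ∈ A.filter (fun x => x.1 = x.2), (2:ℤ) ^ (s2 n - 1) ∣ F x := by
      intro x hx
      rw [Finset.mem_filter, Finset.HasAntidiagonal.mem_antidiagonal] at hx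
      obtain ⟨hsum, heq⟩ := hx
      have hx1 : x.1 = n := by omega
      rcases Nat.even_or_odd n with ⟨m, hm⟩ | hodd
      · have en : n = 2 * m := by omega
        have hm1 : 1 ≤ m := by omega
        obtain ⟨d1, hd1⟩ := h3 m hm1
        have : F x = (2:ℤ) ^ (s2 m - 1) * d1 * ((2:ℤ) ^ (s2 m - 1) * d1) := by
          simp only [hF]
          rw [← heq, hx1, en, hd1]
        rw [this, en, s2_two_mul]
        have h2m : 1 ≤ s2 m := s2_pos m hm1
        calc (2:ℤ) ^ (s2 m - 1) ∣ (2:ℤ) ^ (s2 m - 1) * (d1 * ((2:ℤ) ^ (s2 m - 1) * d1)) :=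
              Dvd.intro _ rfl
          _ = (2:ℤ) ^ (s2 m - 1) * d1 * ((2:ℤ) ^ (s2 m - 1) * d1) := by ring
      · have : p.coeff x.1 = 0 := coeff_odd ⟨h1, h2, h3⟩ (by rw [hx1]; rcases hodd with ⟨t, ht⟩; omega)
        simp [hF, this]
    -- swap bijection
    have hswap : ∑ x ∈ A.filter (fun x => x.2 < x.1), F x
        = ∑ x ∈ A.filter (fun x => x.1 < x.2), F x := by
      refine Finset.sum_nbij' (fun x => Prod.swap x) (fun x => Prod.swap x) ?_ ?_ ?_ ?_ ?_
      · intro x hx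
        rw [Finset.mem_filter, Finset.HasAntidiagonal.mem_antidiagonal] at hx ⊢
        exact ⟨by simpa [add_comm] using hx.1, hx.2⟩
      · intro x hx
        rw [Finset.mem_filter, Finset.HasAntidiagonal.mem_antidiagonal] at hx ⊢
        exact ⟨by simpa [add_comm] using hx.1, hx.2⟩
      · intro x _; rfl
      · intro x _; rfl
      · intro x _; rw [hF]; exact mul_comm _ _
    -- decompose the sum
    have hdec : ∑ x ∈ A, F x
        = (∑ x ∈ A.filter (fun x => x.1 < x.2), F x)
          + ((∑ x ∈ A.filter (fun x => x.2 < x.1), F x)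
          + (∑ x ∈ A.filter (fun x => x.1 = x.2), F x)) := by
      rw [← Finset.sum_filter_add_sum_filter_not A (fun x => x.1 < x.2) F]
      congr 1
      rw [← Finset.sum_filter_add_sum_filter_not (A.filter (fun x => ¬ x.1 < x.2))
        (fun x => x.2 < x.1) F]
      congr 1
      · congr 1
        rw [Finset.filter_filter]
        apply Finset.filter_congr
        intro x _
        constructor
        · exact fun h => h.2
        · exact fun h => ⟨by omega, h⟩
      · congr 1
        rw [Finset.filter_filter]
        apply Finset.filter_congr
        intro x _
        constructor
        · rintro ⟨h1', h2'⟩; omega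
        · intro h; omega
    rw [hdec, hswap]
    have : (∑ x ∈ A.filter (fun x => x.1 < x.2), F x)
        + ((∑ x ∈ A.filter (fun x => x.1 < x.2), F x)
        + (∑ x ∈ A.filter (fun x => x.1 = x.2), F x))
        = (∑ x ∈ A.filter (fun x => x.1 < x.2), 2 * F x)
          + (∑ x ∈ A.filter (fun x => x.1 = x.2), F x) := by
      rw [← Finset.mul_sum]
      ring
    rw [this]
    exact dvd_add (Finset.dvd_sum hterm) (Finset.dvd_sum hdiag)

private lemma InT_sub {p q : Polynomial ℤ} (hp : InT p) (hq : InT q) : InT (p - q) := by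
  rw [sub_eq_add_neg]; exact InT_add hp (InT_neg hq)

private lemma InT_two_mul {a b : Polynomial ℤ} (ha : InT a) (hb : InT b) :
    InT (2 * (a * b)) := by
  have key : 2 * (a * b) = (a + b) * (a + b) - a * a - b * b := by ring
  rw [key]
  exact InT_sub (InT_sub (InT_sq (InT_add ha hb)) (InT_sq ha)) (InT_sq hb)

private lemma InT_pow_key : ∀ i : ℕ, 1 ≤ i → ∀ q : Polynomial ℤ, InT q →
    InT (C ((2:ℤ) ^ (s2 i - 1)) * q ^ (2 * i)) := by
  intro i
  induction i using Nat.strong_induction_on with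
  | _ i ih =>
    intro hi q hq
    rcases Nat.even_or_odd i with ⟨j, hj⟩ | ⟨j, hj⟩
    · -- i = 2j, j ≥ 1
      have hij : i = 2 * j := by omega
      have hj1 : 1 ≤ j := by omega
      have e : C ((2:ℤ) ^ (s2 i - 1)) * q ^ (2 * i)
          = C ((2:ℤ) ^ (s2 j - 1)) * (q * q) ^ (2 * j) := by
        rw [hij, s2_two_mul]
        congr 1
        rw [← sq, ← pow_mul]
      rw [e]
      exact ih j (by omega) hj1 (q * q) (InT_sq hq)
    · -- i = 2j + 1
      have hij : i = 2 * j + 1 := by omega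
      rcases Nat.eq_zero_or_pos j with hj0 | hj1
      · -- i = 1
        have : i = 1 := by omega
        subst this
        have e : C ((2:ℤ) ^ (s2 1 - 1)) * q ^ (2 * 1) = q * q := by
          rw [s2_one]; simp [sq]
        rw [e]
        exact InT_sq hq
      · -- j ≥ 1
        have hsj : 1 ≤ s2 j := s2_pos j hj1
        have e : C ((2:ℤ) ^ (s2 i - 1)) * q ^ (2 * i)
            = 2 * ((C ((2:ℤ) ^ (s2 j - 1)) * (q * q) ^ (2 * j)) * (q * q)) := by
          rw [hij, s2_two_mul_add_one]
          have e2 : s2 j + 1 - 1 = 1 + (s2 j - 1) := by omega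
          rw [e2, pow_add, map_mul]
          rw [← sq, ← pow_mul]
          simp only [pow_one, map_ofNat]
          ring_nf
        rw [e]
        exact InT_two_mul (ih j (by omega) hj1 (q * q) (InT_sq hq)) (InT_sq hq)

private lemma InT_comp {p q : Polynomial ℤ} (hp : InT p) (hq : InT q) :
    InT (p.comp q) := by
  rw [comp_eq_sum_left]
  rw [Polynomial.sum]
  refine Finset.sum_induction _ InT (fun _ _ => InT_add) InT_zero ?_
  intro k hk
  rcases Nat.eq_zero_or_pos k with hk0 | hkpos
  · subst hk0
    have : p.coeff 0 = 0 := hp.1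
    rw [this]
    simpa using InT_zero
  rcases Nat.even_or_odd k with ⟨i, hi⟩ | ⟨i, hi⟩
  · -- k = 2i, i ≥ 1
    have hik : k = 2 * i := by omega
    have hi1 : 1 ≤ i := by omega
    obtain ⟨d, hd⟩ := hp.2.2 i hi1
    have e : C (p.coeff k) * q ^ k = C d * (C ((2:ℤ) ^ (s2 i - 1)) * q ^ (2 * i)) := by
      rw [hik, hd, map_mul]
      ring
    rw [e]
    exact InT_Cmul d (InT_pow_key i hi1 q hq)
  · -- k odd
    have hik : k = 2 * i + 1 := by omega
    have : p.coeff k = 0 := by rw [hik]; exact hp.2.1 i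
    rw [this]
    simpa using InT_zero

private lemma InT_X_sq : InT ((X : Polynomial ℤ) ^ 2) := by
  refine ⟨by simp, fun i => by
    rw [coeff_X_pow]
    simp only [ite_eq_right_iff]
    intro h; omega, fun i hi => ?_⟩
  rw [coeff_X_pow]
  by_cases h : 2 * i = 2
  · have : i = 1 := by omega
    subst this
    simp [s2_one, h]
  · simp [Ne.symm (h ∘ Eq.symm), h]

private lemma nr_sub {S} {a b : Polynomial ℤ} (ha : NRGen S a) (hb : NRGen S b) :
    NRGen S (a - b) := by
  rw [sub_eq_add_neg]; exact NRGen.add ha (NRGen.neg hb)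

private lemma nr_X2 : NRGen {X ^ 2} ((X : Polynomial ℤ) ^ 2) := NRGen.mem rfl

private lemma nr_sq {a : Polynomial ℤ} (ha : NRGen {X ^ 2} a) : NRGen {X ^ 2} (a * a) := by
  have := NRGen.comp nr_X2 ha
  rwa [X_pow_comp, pow_two a] at this

private lemma nr_two_mul {a b : Polynomial ℤ} (ha : NRGen {X ^ 2} a) (hb : NRGen {X ^ 2} b) :
    NRGen {X ^ 2} (2 * (a * b)) := by
  have key : 2 * (a * b) = (a + b) * (a + b) - a * a - b * b := by ring
  rw [key]
  exact nr_sub (nr_sub (nr_sq (NRGen.add ha hb)) (nr_sq ha)) (nr_sq hb)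

private lemma nr_Cmul {a : Polynomial ℤ} (d : ℤ) (ha : NRGen {X ^ 2} a) :
    NRGen {X ^ 2} (C d * a) := by
  induction d using Int.induction_on with
  | zero => simpa using NRGen.zero
  | succ n ihn =>
    have e : C ((n : ℤ) + 1) * a = C (n : ℤ) * a + a := by
      rw [map_add, map_one]; ring
    rw [e]; exact NRGen.add ihn ha
  | pred n ihn =>
    have e : C (-(n : ℤ) - 1) * a = C (-(n : ℤ)) * a - a := by
      rw [map_sub, map_one]; ring
    rw [e]; exact nr_sub ihn ha

private lemma nr_mono : ∀ i : ℕ, 1 ≤ i →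
    NRGen {X ^ 2} (C ((2:ℤ) ^ (s2 i - 1)) * X ^ (2 * i)) := by
  intro i
  induction i using Nat.strong_induction_on with
  | _ i ih =>
    intro hi
    rcases Nat.even_or_odd i with ⟨j, hj⟩ | ⟨j, hj⟩
    · -- i = 2j
      have hij : i = 2 * j := by omega
      have hj1 : 1 ≤ j := by omega
      have h := NRGen.comp (ih j (by omega) hj1) nr_X2
      rw [mul_comp, C_comp, X_pow_comp, ← pow_mul] at h
      have e : C ((2:ℤ) ^ (s2 i - 1)) * X ^ (2 * i)
          = C ((2:ℤ) ^ (s2 j - 1)) * (X : Polynomial ℤ) ^ (2 * (2 * j)) := by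
        rw [hij, s2_two_mul]
      rwa [e]
    · have hij : i = 2 * j + 1 := by omega
      rcases Nat.eq_zero_or_pos j with hj0 | hj1
      · have : i = 1 := by omega
        subst this
        have e : C ((2:ℤ) ^ (s2 1 - 1)) * (X : Polynomial ℤ) ^ (2 * 1) = X ^ 2 := by
          rw [s2_one]; simp
        rw [e]; exact nr_X2
      · -- i = 2j+1, j ≥ 1
        have hsj : 1 ≤ s2 j := s2_pos j hj1
        have h := NRGen.comp (ih j (by omega) hj1) nr_X2
        rw [mul_comp, C_comp, X_pow_comp, ← pow_mul] at h
        have h2 := nr_two_mul h nr_X2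
        have e : C ((2:ℤ) ^ (s2 i - 1)) * X ^ (2 * i)
            = 2 * ((C ((2:ℤ) ^ (s2 j - 1)) * (X : Polynomial ℤ) ^ (2 * (2 * j))) * X ^ 2) := by
          rw [hij, s2_two_mul_add_one]
          have e2 : s2 j + 1 - 1 = 1 + (s2 j - 1) := by omega
          rw [e2, pow_add, map_mul]
          simp only [pow_one, map_ofNat]
          ring_nf
        rw [e]
        exact h2

private lemma nr_of_cond (p : Polynomial ℤ)
    (h1 : p.coeff 0 = 0) (h2 : ∀ i : ℕ, p.coeff (2 * i + 1) = 0)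
    (h3 : ∀ i : ℕ, 1 ≤ i → (2 : ℤ) ^ (s2 i - 1) ∣ p.coeff (2 * i)) :
    NRGen {X ^ 2} p := by
  conv => rw [← Polynomial.sum_monomial_eq p]
  rw [Polynomial.sum]
  refine Finset.sum_induction _ (NRGen {X ^ 2}) (fun _ _ => NRGen.add) NRGen.zero ?_
  intro k hk
  rcases Nat.eq_zero_or_pos k with hk0 | hkpos
  · subst hk0
    rw [h1]
    simpa using NRGen.zero
  rcases Nat.even_or_odd k with ⟨i, hi⟩ | ⟨i, hi⟩
  · have hik : k = 2 * i := by omega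
    have hi1 : 1 ≤ i := by omega
    obtain ⟨d, hd⟩ := h3 i hi1
    have e : (monomial k) (p.coeff k) = C d * (C ((2:ℤ) ^ (s2 i - 1)) * X ^ (2 * i)) := by
      rw [hik, hd, ← C_mul_X_pow_eq_monomial, map_mul]
      ring
    rw [e]
    exact nr_Cmul d (nr_mono i hi1)
  · have hik : k = 2 * i + 1 := by omega
    have : p.coeff k = 0 := by rw [hik]; exact h2 i
    rw [this]
    simpa using NRGen.zero

private lemma nr_forward {p : Polynomial ℤ} (h : NRGen {X ^ 2} p) : InT p := by
  induction h with
  | mem hm =>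
    rw [Set.mem_singleton_iff] at hm
    subst hm
    exact InT_X_sq
  | zero => exact InT_zero
  | add _ _ ih1 ih2 => exact InT_add ih1 ih2
  | neg _ ih => exact InT_neg ih
  | comp _ _ ih1 ih2 => exact InT_comp ih1 ih2

theorem mem_gen_x2 (p : Polynomial ℤ) :
    NRGen {X ^ 2} p ↔
      p.coeff 0 = 0 ∧ (∀ i : ℕ, p.coeff (2 * i + 1) = 0) ∧
        ∀ i : ℕ, 1 ≤ i → (2 : ℤ) ^ ((Nat.digits 2 i).sum - 1) ∣ p.coeff (2 * i) := by
  constructor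
  · intro h
    exact nr_forward h
  · rintro ⟨h1, h2, h3⟩
    exact nr_of_cond p h1 h2 h3
end

section
/- Let F be the subnearring of (ℤ[x], +, ∘) generated by {x³}. Then for every a ∈ ℕ, x^(3^a) ∈ F, and for every p ∈ F and a ∈ ℕ, the polynomials 3p·x^(2·3^a) + 3p²·x^(3^a), 6p·x^(2·3^a), and 6p²·x^(3^a) all lie in F. -/
open Polynomial

theorem gen_x3_basic_elements :
    (∀ a : ℕ, 1 ≤ a → NRGen {X ^ 3} ((X : Polynomial ℤ) ^ 3 ^ a)) ∧
    ∀ p : Polynomial ℤ, NRGen {X ^ 3} p → ∀ a : ℕ, 1 ≤ a →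
      NRGen {X ^ 3} (3 * p * X ^ (2 * 3 ^ a) + 3 * p ^ 2 * X ^ 3 ^ a) ∧
      NRGen {X ^ 3} (6 * p * X ^ (2 * 3 ^ a)) ∧
      NRGen {X ^ 3} (6 * p ^ 2 * X ^ 3 ^ a) := by
  set S : Set (Polynomial ℤ) := {X ^ 3} with hS
  have hmem : NRGen S ((X : Polynomial ℤ) ^ 3) := NRGen.mem rfl
  have hcube : ∀ p : Polynomial ℤ, NRGen S p → NRGen S (p ^ 3) := by
    intro p hp
    have := NRGen.comp hmem hp
    simpa [pow_comp, X_comp] using this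
  have hsub : ∀ p q : Polynomial ℤ, NRGen S p → NRGen S q → NRGen S (p - q) := by
    intro p q hp hq
    simpa [sub_eq_add_neg] using hp.add hq.neg
  have hx : ∀ a : ℕ, 1 ≤ a → NRGen S ((X : Polynomial ℤ) ^ 3 ^ a) := by
    intro a ha
    induction a, ha using Nat.le_induction with
    | base => simpa using hmem
    | succ a ha ih =>
      have h : ((X : Polynomial ℤ) ^ 3 ^ (a + 1)) = ((X : Polynomial ℤ) ^ 3 ^ a) ^ 3 := by
        rw [← pow_mul, pow_succ]
      rw [h]
      exact hcube _ ih
  have key : ∀ p : Polynomial ℤ, NRGen S p → ∀ a : ℕ, 1 ≤ a →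
      NRGen S (3 * p * X ^ (2 * 3 ^ a) + 3 * p ^ 2 * X ^ 3 ^ a) := by
    intro p hp a ha
    have h1 : NRGen S ((p + (X : Polynomial ℤ) ^ 3 ^ a) ^ 3) := hcube _ (hp.add (hx a ha))
    have h2 : NRGen S (p ^ 3) := hcube _ hp
    have h3 : NRGen S (((X : Polynomial ℤ) ^ 3 ^ a) ^ 3) := hcube _ (hx a ha)
    have h := hsub _ _ (hsub _ _ h1 h2) h3
    have e : (p + (X : Polynomial ℤ) ^ 3 ^ a) ^ 3 - p ^ 3 - ((X : Polynomial ℤ) ^ 3 ^ a) ^ 3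
        = 3 * p * X ^ (2 * 3 ^ a) + 3 * p ^ 2 * X ^ 3 ^ a := by
      rw [two_mul, pow_add]; ring
    rwa [e] at h
  refine ⟨hx, fun p hp a ha => ?_⟩
  have k1 := key p hp a ha
  have k2 := key (-p) hp.neg a ha
  refine ⟨k1, ?_, ?_⟩
  · have h := hsub _ _ k1 k2
    have e : (3 * p * X ^ (2 * 3 ^ a) + 3 * p ^ 2 * X ^ 3 ^ a)
        - (3 * -p * X ^ (2 * 3 ^ a) + 3 * (-p) ^ 2 * X ^ 3 ^ a)
        = 6 * p * X ^ (2 * 3 ^ a) := by ring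
    rwa [e] at h
  · have h := k1.add k2
    have e : (3 * p * X ^ (2 * 3 ^ a) + 3 * p ^ 2 * X ^ 3 ^ a)
        + (3 * -p * X ^ (2 * 3 ^ a) + 3 * (-p) ^ 2 * X ^ 3 ^ a)
        = 6 * p ^ 2 * X ^ 3 ^ a := by ring
    rwa [e] at h
end

section
/- A polynomial p = Σᵢ cᵢxⁱ ∈ ℤ[x] lies in the subnearring of (ℤ[x], +, ∘) generated by {1, x³} if and only if cᵢ = 0 for all i not divisible by 3, and 3^⌊s₃(i)/2⌋ divides cᵢ for all i divisible by 3, where s₃(i) is the ternary digit sum of i. -/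
open Polynomial

/-- ternary digit sum -/
private def S3 (n : ℕ) : ℕ := (Nat.digits 3 n).sum
/-- half the ternary digit sum -/
private def E3 (n : ℕ) : ℕ := S3 n / 2

private lemma S3_zero : S3 0 = 0 := by unfold S3; simp

private lemma S3_eq (n : ℕ) (hn : 0 < n) : S3 n = n % 3 + S3 (n / 3) := by
  unfold S3
  rw [Nat.digits_def' (by norm_num : 1 < 3) hn]
  simp

private lemma S3_dig (u r : ℕ) (hr : r < 3) : S3 (3 * u + r) = r + S3 u := by
  rcases Nat.eq_zero_or_pos (3 * u + r) with h | h
  · have hu : u = 0 := by omega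
    have hr0 : r = 0 := by omega
    simp [hu, hr0, S3_zero]
  · rw [S3_eq _ h]
    congr 1
    · omega
    · congr 1
      omega

private lemma S3_one : S3 1 = 1 := by
  have := S3_dig 0 1 (by norm_num)
  simpa [S3_zero] using this

private lemma S3_mul3 (u : ℕ) : S3 (3 * u) = S3 u := by
  have := S3_dig u 0 (by norm_num)
  simpa using this

private lemma S3_eq_zero_iff (n : ℕ) : S3 n = 0 ↔ n = 0 := by
  constructor
  · intro h
    by_contra hn
    induction n using Nat.strong_induction_on with
    | _ n ih =>
      have hpos : 0 < n := Nat.pos_of_ne_zero hn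
      rw [S3_eq n hpos] at h
      have h1 : n % 3 = 0 := by omega
      have h2 : S3 (n / 3) = 0 := by omega
      have hlt : n / 3 < n := Nat.div_lt_self hpos (by norm_num)
      have : n / 3 ≠ 0 := by omega
      exact ih (n / 3) hlt h2 this
  · rintro rfl; exact S3_zero

private lemma S3_succ_le (n : ℕ) : S3 (n + 1) ≤ S3 n + 1 := by
  induction n using Nat.strong_induction_on with
  | _ n ih =>
    rcases Nat.lt_or_ge (n % 3) 2 with h | h
    · -- n+1 = 3*(n/3) + (n%3+1), no carry
      have e1 : n + 1 = 3 * (n / 3) + (n % 3 + 1) := by omega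
      have e2 : n = 3 * (n / 3) + n % 3 := by omega
      rw [e1, S3_dig _ _ (by omega)]
      conv_rhs => rw [e2, S3_dig _ _ (by omega)]
      omega
    · -- n % 3 = 2
      have h2 : n % 3 = 2 := by omega
      have e1 : n + 1 = 3 * (n / 3 + 1) + 0 := by omega
      have e2 : n = 3 * (n / 3) + 2 := by omega
      rw [e1, S3_dig _ _ (by norm_num)]
      conv_rhs => rw [e2, S3_dig _ _ (by norm_num)]
      have hih : S3 (n / 3 + 1) ≤ S3 (n / 3) + 1 := ih (n / 3) (by omega)
      omega

private lemma S3_add_le (a b : ℕ) : S3 (a + b) ≤ S3 a + S3 b := by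
  induction a using Nat.strong_induction_on generalizing b with
  | _ a ih =>
    rcases Nat.eq_zero_or_pos a with rfl | ha
    · simp [S3_zero]
    rcases Nat.eq_zero_or_pos b with rfl | hb
    · simp [S3_zero]
    have ea : a = 3 * (a / 3) + a % 3 := by omega
    have eb : b = 3 * (b / 3) + b % 3 := by omega
    rcases Nat.lt_or_ge (a % 3 + b % 3) 3 with h | h
    · have e : a + b = 3 * (a / 3 + b / 3) + (a % 3 + b % 3) := by omega
      rw [e, S3_dig _ _ (by omega)]
      conv_rhs => rw [ea, S3_dig _ _ (by omega), eb, S3_dig _ _ (by omega)]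
      have hih : S3 (a / 3 + b / 3) ≤ S3 (a / 3) + S3 (b / 3) :=
        ih (a / 3) (by omega) (b / 3)
      omega
    · have e : a + b = 3 * (a / 3 + b / 3 + 1) + (a % 3 + b % 3 - 3) := by omega
      rw [e, S3_dig _ _ (by omega)]
      conv_rhs => rw [ea, S3_dig _ _ (by omega), eb, S3_dig _ _ (by omega)]
      have hih : S3 (a / 3 + b / 3 + 1) ≤ S3 (a / 3 + b / 3) + 1 := by
        have := S3_succ_le (a / 3 + b / 3); omega
      have hih2 : S3 (a / 3 + b / 3) ≤ S3 (a / 3) + S3 (b / 3) :=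
        ih (a / 3) (by omega) (b / 3)
      omega

private lemma S3_mod_two (n : ℕ) : S3 n % 2 = n % 2 := by
  induction n using Nat.strong_induction_on with
  | _ n ih =>
    rcases Nat.eq_zero_or_pos n with rfl | hn
    · simp [S3_zero]
    rw [S3_eq n hn]
    have hih : S3 (n / 3) % 2 = (n / 3) % 2 := ih (n / 3) (Nat.div_lt_self hn (by norm_num))
    omega

/-- split off a single ternary digit unit -/
private lemma S3_split (m : ℕ) (hm : 0 < m) (hs : 2 ≤ S3 m) :
    ∃ a b, m = a + b ∧ S3 a = 1 ∧ S3 b = S3 m - 1 ∧ 0 < b := by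
  induction m using Nat.strong_induction_on with
  | _ m ih =>
    rcases Nat.eq_zero_or_pos (m % 3) with h0 | h0
    · -- 3 ∣ m
      have e : m = 3 * (m / 3) := by omega
      have hS : S3 (m / 3) = S3 m := by conv_rhs => rw [e, S3_mul3]
      obtain ⟨a, b, hab, ha, hb, hbpos⟩ :=
        ih (m / 3) (by omega) (by omega) (by omega)
      exact ⟨3 * a, 3 * b, by omega, by rw [S3_mul3]; exact ha,
        by rw [S3_mul3, hb, hS], by omega⟩
    · refine ⟨1, m - 1, by omega, S3_one, ?_, ?_⟩
      · have e : m = 3 * (m / 3) + m % 3 := by omega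
        have e2 : m - 1 = 3 * (m / 3) + (m % 3 - 1) := by omega
        rw [e2, S3_dig _ _ (by omega)]
        conv_rhs => rw [e, S3_dig _ _ (by omega)]
        omega
      · -- b > 0 : else m = 1 and S3 m = 1 < 2
        rcases Nat.lt_or_ge 1 m with h | h
        · omega
        · have : m = 1 := by omega
          rw [this, S3_one] at hs; omega

-- key inequalities for E3
private lemma E3_add_le (j k : ℕ) : E3 (j + k) ≤ E3 j + E3 k + 1 := by
  have := S3_add_le j k
  unfold E3
  omega

private lemma E3_add_le' (j k : ℕ) (h : j % 2 = 0 ∨ k % 2 = 0) :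
    E3 (j + k) ≤ E3 j + E3 k := by
  have h1 := S3_add_le j k
  have h2 := S3_mod_two j
  have h3 := S3_mod_two k
  unfold E3
  omega

private lemma E3_add3_le (s t y : ℕ) : E3 (s + t + y) ≤ E3 s + E3 t + E3 y + 1 := by
  have h1 := S3_add_le (s + t) y
  have h2 := S3_add_le s t
  unfold E3
  omega

private lemma E3_mul3 (n : ℕ) : E3 (3 * n) = E3 n := by unfold E3; rw [S3_mul3]

private lemma E3_zero : E3 0 = 0 := by unfold E3; rw [S3_zero]
private lemma E3_one : E3 1 = 0 := by unfold E3; rw [S3_one]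

/-- divisibility condition -/
private def Dcond (p : Polynomial ℤ) : Prop := ∀ i : ℕ, (3:ℤ) ^ (E3 i) ∣ p.coeff i

/-- coefficientwise: 3·(u·v·w) has enough threes -/
private lemma triple_coeff_dvd {u v w : Polynomial ℤ} (hu : Dcond u) (hv : Dcond v)
    (hw : Dcond w) (K : ℕ) : (3:ℤ) ^ (E3 K) ∣ 3 * (u * v * w).coeff K := by
  rw [coeff_mul, Finset.mul_sum]
  apply Finset.dvd_sum
  rintro ⟨x, y⟩ hxy
  have hxy' : x + y = K := Finset.HasAntidiagonal.mem_antidiagonal.mp hxy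
  rw [coeff_mul, Finset.sum_mul, Finset.mul_sum]
  apply Finset.dvd_sum
  rintro ⟨s, t⟩ hst
  have hst' : s + t = x := Finset.HasAntidiagonal.mem_antidiagonal.mp hst
  have key : E3 K ≤ 1 + E3 s + E3 t + E3 y := by
    have := E3_add3_le s t y
    have e : s + t + y = K := by omega
    rw [e] at this; omega
  obtain ⟨A, hA⟩ := hu s
  obtain ⟨B, hB⟩ := hv t
  obtain ⟨C, hC⟩ := hw y
  refine dvd_trans (pow_dvd_pow 3 key) ⟨A * B * C, ?_⟩
  rw [hA, hB, hC]; ring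

/-- monomials of a Dcond polynomial are Dcond -/
private lemma Dcond_monomial {n : ℕ} {c : ℤ} (h : (3:ℤ) ^ (E3 n) ∣ c) :
    Dcond (monomial n c) := by
  intro i
  rw [coeff_monomial]
  split
  · next he => subst he; exact h
  · exact dvd_zero _

private lemma Dcond_cube {u : Polynomial ℤ} (hu : Dcond u) : Dcond (u ^ 3) := by
  suffices H : ∀ c (u : Polynomial ℤ), u.support.card ≤ c → Dcond u → Dcond (u ^ 3) from
    H _ u le_rfl hu
  intro c
  induction c with
  | zero =>
    intro u hcard _
    have h0 : u = 0 := by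
      rw [← Polynomial.support_eq_empty, ← Finset.card_eq_zero]; omega
    subst h0
    intro K; rw [zero_pow (by norm_num)]; simp
  | succ c ih =>
    intro u hcard hu
    by_cases h0 : u = 0
    · subst h0; intro K; rw [zero_pow (by norm_num)]; simp
    · set e := u.eraseLead with he
      set mo := monomial u.natDegree u.leadingCoeff with hmo
      have hdecomp : u = e + mo := (eraseLead_add_monomial_natDegree_leadingCoeff u).symm
      have hde : Dcond e := by
        intro i
        rw [he, eraseLead_coeff]
        split
        · exact dvd_zero _
        · exact hu i
      have hdm : Dcond mo := Dcond_monomial (hu u.natDegree)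
      have hcarde : e.support.card ≤ c := by
        rw [he]
        have := eraseLead_support_card_lt h0; omega
      have he3 : Dcond (e ^ 3) := ih e hcarde hde
      intro K
      have hcube : (u ^ 3).coeff K
          = (e ^ 3).coeff K + 3 * (e * e * mo).coeff K
            + (3 * (e * mo * mo).coeff K + (mo ^ 3).coeff K) := by
        have : u ^ 3 = e ^ 3 + C 3 * (e * e * mo) + (C 3 * (e * mo * mo) + mo ^ 3) := by
          rw [hdecomp, show (C 3 : Polynomial ℤ) = 3 by norm_num]; ring
        rw [this, coeff_add, coeff_add, coeff_add, coeff_C_mul, coeff_C_mul]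
      rw [hcube]
      refine dvd_add (dvd_add (he3 K) (triple_coeff_dvd hde hde hdm K))
        (dvd_add (triple_coeff_dvd hde hdm hdm K) ?_)
      -- monomial cube
      rw [hmo, monomial_pow, coeff_monomial]
      split
      · next heq =>
        subst heq
        have hE : E3 (u.natDegree * 3) = E3 u.natDegree := by
          rw [mul_comm, E3_mul3]
        rw [hE]
        exact dvd_trans (hu u.natDegree) (dvd_pow_self _ (by norm_num))
      · exact dvd_zero _

private def dd (m K : ℕ) : ℕ := if m % 2 = 0 ∧ K % 2 = 1 then 1 else 0

private lemma pow_coeff_dvd {q : Polynomial ℤ} (hq : Dcond q) :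
    ∀ m K : ℕ, (3:ℤ) ^ (E3 K + dd m K) ∣ (3:ℤ) ^ (E3 m) * (q ^ m).coeff K := by
  intro m
  induction m using Nat.strong_induction_on with
  | _ m ih =>
    intro K
    rcases Nat.lt_or_ge m 2 with hm2 | hm2
    · interval_cases m
      · -- m = 0
        rw [pow_zero, coeff_one]
        by_cases hK : K = 0
        · subst hK; simp [dd, E3_zero]
        · simp [hK]
      · -- m = 1
        rw [pow_one]
        have hdd : dd 1 K = 0 := by simp [dd]
        rw [hdd, E3_one, add_zero, pow_zero, one_mul]
        exact hq K
    · have hmpos : 0 < m := by omega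
      have hS1 : 1 ≤ S3 m := by
        have := (S3_eq_zero_iff m); omega
      rcases Nat.lt_or_ge (S3 m) 2 with hs1 | hs2
      · -- S3 m = 1 : m is a power of three, m odd, use cube
        have hs1' : S3 m = 1 := by omega
        have h3 : m % 3 = 0 := by
          by_contra hh
          have h := S3_eq m hmpos
          have h1 : S3 (m / 3) = 0 := by omega
          have h2 := (S3_eq_zero_iff (m / 3)).mp h1
          omega
        have hmod : m = (m / 3) * 3 := by omega
        have hS3 : S3 (m / 3) = 1 := by
          have : S3 (3 * (m / 3)) = S3 (m / 3) := S3_mul3 _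
          rw [show 3 * (m / 3) = m by omega] at this
          omega
        have hqk : Dcond (q ^ (m / 3)) := by
          intro K'
          have hE : E3 (m / 3) = 0 := by unfold E3; omega
          have := ih (m / 3) (by omega) K'
          rw [hE, pow_zero, one_mul] at this
          exact dvd_trans (pow_dvd_pow 3 (Nat.le_add_right _ _)) this
        have hEm : E3 m = 0 := by unfold E3; omega
        have hddm : dd m K = 0 := by
          have hodd := S3_mod_two m
          simp only [dd, ite_eq_right_iff]
          omega
        rw [hEm, hddm, add_zero, pow_zero, one_mul]
        have : q ^ m = (q ^ (m / 3)) ^ 3 := by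
          conv_lhs => rw [hmod]
          rw [pow_mul]
        rw [this]
        exact Dcond_cube hqk K
      · -- split
        obtain ⟨a, b, hab, ha, hb, hbpos⟩ := S3_split m hmpos hs2
        have hapos : 0 < a := by
          rcases Nat.eq_zero_or_pos a with rfl | h
          · rw [S3_zero] at ha; omega
          · exact h
        have halt : a < m := by omega
        have hblt : b < m := by omega
        have hqm : (q ^ m).coeff K = ((q ^ a) * (q ^ b)).coeff K := by rw [hab, pow_add]
        rw [hqm, coeff_mul, Finset.mul_sum]
        apply Finset.dvd_sum
        rintro ⟨x, y⟩ hxy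
        have hxy' : x + y = K := Finset.HasAntidiagonal.mem_antidiagonal.mp hxy
        have hEa : E3 a = 0 := by unfold E3; omega
        have haodd : a % 2 = 1 := by have := S3_mod_two a; omega
        have hdda : dd a x = 0 := by simp only [dd, ite_eq_right_iff]; omega
        have Hx := ih a halt x
        rw [hEa, hdda, pow_zero, one_mul, add_zero] at Hx
        have Hy := ih b hblt y
        obtain ⟨A, hA⟩ := Hx
        obtain ⟨B, hB⟩ := Hy
        rcases Nat.even_or_odd (S3 m) with hsm | hsm
        · -- S3 m even : both a b odd, E3 m = E3 b + 1
          have hsme : S3 m % 2 = 0 := Nat.even_iff.mp hsm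
          have hbodd : b % 2 = 1 := by have := S3_mod_two b; omega
          have hddb : dd b y = 0 := by simp only [dd, ite_eq_right_iff]; omega
          rw [hddb, add_zero] at hB
          have hEm : E3 m = E3 b + 1 := by unfold E3; omega
          have key : E3 K + dd m K ≤ 1 + E3 x + E3 y := by
            have hmev : m % 2 = 0 := by have := S3_mod_two m; omega
            rcases Nat.eq_zero_or_pos (K % 2) with hKev | hKodd
            · have hdm0 : dd m K = 0 := by simp only [dd, ite_eq_right_iff]; omega
              have h2 := E3_add_le x y
              rw [hxy'] at h2; omega
            · have hdm1 : dd m K ≤ 1 := by simp only [dd]; split <;> omega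
              have hxy2 : x % 2 = 0 ∨ y % 2 = 0 := by omega
              have h2 := E3_add_le' x y hxy2
              rw [hxy'] at h2; omega
          refine dvd_trans (pow_dvd_pow 3 key) ⟨A * B, ?_⟩
          rw [hEm]
          calc (3:ℤ) ^ (E3 b + 1) * ((q ^ a).coeff x * (q ^ b).coeff y)
              = 3 * ((q ^ a).coeff x) * (3 ^ (E3 b) * (q ^ b).coeff y) := by ring
            _ = 3 * (3 ^ (E3 x) * A) * (3 ^ (E3 y) * B) := by rw [hA, hB]
            _ = 3 ^ (1 + E3 x + E3 y) * (A * B) := by ring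
        · -- S3 m odd : a odd, b even, E3 m = E3 b, dd m K = 0
          have hsmo : S3 m % 2 = 1 := Nat.odd_iff.mp hsm
          have hbev : b % 2 = 0 := by have := S3_mod_two b; omega
          have hEm : E3 m = E3 b := by unfold E3; omega
          have hmodd : m % 2 = 1 := by have := S3_mod_two m; omega
          have hddm : dd m K = 0 := by simp only [dd, ite_eq_right_iff]; omega
          have key : E3 K + dd m K ≤ E3 x + (E3 y + dd b y) := by
            rw [hddm, add_zero]
            rcases Nat.eq_zero_or_pos (x % 2) with hx2 | hx2
            · have h2 := E3_add_le' x y (Or.inl (by omega))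
              rw [hxy'] at h2; omega
            · rcases Nat.eq_zero_or_pos (y % 2) with hy2 | hy2
              · have h2 := E3_add_le' x y (Or.inr (by omega))
                rw [hxy'] at h2; omega
              · have hdb1 : dd b y = 1 := by simp only [dd, ite_eq_left_iff]; omega
                have h2 := E3_add_le x y
                rw [hxy'] at h2; omega
          refine dvd_trans (pow_dvd_pow 3 key) ⟨A * B, ?_⟩
          rw [hEm]
          calc (3:ℤ) ^ (E3 b) * ((q ^ a).coeff x * (q ^ b).coeff y)
              = (q ^ a).coeff x * (3 ^ (E3 b) * (q ^ b).coeff y) := by ring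
            _ = (3 ^ (E3 x) * A) * (3 ^ (E3 y + dd b y) * B) := by rw [hA, hB]
            _ = 3 ^ (E3 x + (E3 y + dd b y)) * (A * B) := by ring

/-- support condition -/
private def Mcond (p : Polynomial ℤ) : Prop := ∀ i : ℕ, ¬ (3 ∣ i) → p.coeff i = 0

private def Cond (p : Polynomial ℤ) : Prop := Mcond p ∧ Dcond p

private lemma Mcond_pow {q : Polynomial ℤ} (hq : Mcond q) : ∀ m, Mcond (q ^ m) := by
  intro m
  induction m with
  | zero =>
    intro i hi
    rw [pow_zero, coeff_one]
    have : i ≠ 0 := by rintro rfl; exact hi ⟨0, rfl⟩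
    simp [this]
  | succ m ih =>
    intro i hi
    rw [pow_succ, coeff_mul]
    apply Finset.sum_eq_zero
    rintro ⟨x, y⟩ hxy
    have hxy' : x + y = i := Finset.HasAntidiagonal.mem_antidiagonal.mp hxy
    have : ¬ (3 ∣ x) ∨ ¬ (3 ∣ y) := by
      by_contra h
      push_neg at h
      exact hi (by omega)
    rcases this with h | h
    · rw [ih x h, zero_mul]
    · rw [hq y h, mul_zero]

private lemma Cond_comp {p q : Polynomial ℤ} (hp : Cond p) (hq : Cond q) :
    Cond (p.comp q) := by
  constructor
  · intro i hi
    rw [comp_eq_sum_left, Polynomial.sum_def, finset_sum_coeff]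
    apply Finset.sum_eq_zero
    intro m _
    rw [coeff_C_mul]
    rw [Mcond_pow hq.1 m i hi, mul_zero]
  · intro i
    rw [comp_eq_sum_left, Polynomial.sum_def, finset_sum_coeff]
    apply Finset.dvd_sum
    intro m _
    rw [coeff_C_mul]
    obtain ⟨d, hd⟩ := hp.2 m
    have h1 := pow_coeff_dvd hq.2 m i
    have h2 : (3:ℤ) ^ (E3 i) ∣ (3:ℤ) ^ (E3 m) * (q ^ m).coeff i :=
      dvd_trans (pow_dvd_pow 3 (Nat.le_add_right _ _)) h1
    obtain ⟨B, hB⟩ := h2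
    refine ⟨d * B, ?_⟩
    rw [hd]
    calc (3:ℤ) ^ (E3 m) * d * (q ^ m).coeff i
        = d * ((3:ℤ) ^ (E3 m) * (q ^ m).coeff i) := by ring
      _ = d * ((3:ℤ) ^ (E3 i) * B) := by rw [hB]
      _ = (3:ℤ) ^ (E3 i) * (d * B) := by ring

private lemma Cond_one : Cond (1 : Polynomial ℤ) := by
  constructor
  · intro i hi
    rw [coeff_one]
    have : i ≠ 0 := by rintro rfl; exact hi ⟨0, rfl⟩
    simp [this]
  · intro i
    rw [coeff_one]
    by_cases h : i = 0
    · subst h; rw [E3_zero]; simp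
    · simp [h]

private lemma E3_three : E3 3 = 0 := by
  unfold E3
  rw [show (3:ℕ) = 3 * 1 by norm_num, S3_mul3, S3_one]

private lemma Cond_X3 : Cond ((X : Polynomial ℤ) ^ 3) := by
  constructor
  · intro i hi
    rw [coeff_X_pow]
    have : i ≠ 3 := by rintro rfl; exact hi ⟨1, rfl⟩
    simp [this]
  · intro i
    rw [coeff_X_pow]
    by_cases h : i = 3
    · subst h; rw [E3_three]; simp
    · simp [h]

private lemma Cond_forward {p : Polynomial ℤ} (h : NRGen {1, X ^ 3} p) : Cond p := by
  induction h with
  | mem hp =>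
    rcases hp with rfl | rfl
    · exact Cond_one
    · exact Cond_X3
  | zero => exact ⟨fun i _ => by simp, fun i => by simp⟩
  | add hp hq ihp ihq =>
    exact ⟨fun i hi => by rw [coeff_add, ihp.1 i hi, ihq.1 i hi, add_zero],
      fun i => by rw [coeff_add]; exact dvd_add (ihp.2 i) (ihq.2 i)⟩
  | neg hp ihp =>
    exact ⟨fun i hi => by rw [coeff_neg, ihp.1 i hi, neg_zero],
      fun i => by rw [coeff_neg]; exact (ihp.2 i).neg_right⟩
  | comp hp hq ihp ihq => exact Cond_comp ihp ihq

-- ### NRGen helper lemmas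
private abbrev TT (p : Polynomial ℤ) : Prop := NRGen {1, (X:Polynomial ℤ) ^ 3} p

private lemma T_one : TT 1 := NRGen.mem (Set.mem_insert _ _)
private lemma T_X3 : TT ((X:Polynomial ℤ) ^ 3) :=
  NRGen.mem (Set.mem_insert_of_mem _ rfl)
private lemma T_sub {p q : Polynomial ℤ} (hp : TT p) (hq : TT q) : TT (p - q) := by
  rw [sub_eq_add_neg]; exact .add hp (.neg hq)
private lemma T_smul (c : ℤ) {p : Polynomial ℤ} (hp : TT p) : TT (c • p) := by
  induction c using Int.induction_on with
  | zero => rw [zero_smul]; exact .zero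
  | succ n ih =>
    rw [show ((n:ℤ) + 1) • p = (n:ℤ) • p + p by rw [add_smul, one_smul]]
    exact .add ih hp
  | pred n ih =>
    rw [show (-(n:ℤ) - 1) • p = (-(n:ℤ)) • p + -p by rw [sub_smul, one_smul, sub_eq_add_neg]]
    exact .add ih (.neg hp)
private lemma T_cube {p : Polynomial ℤ} (hp : TT p) : TT (p ^ 3) := by
  have := NRGen.comp T_X3 hp
  rwa [X_pow_comp] at this

/-- 6uv as a combination of cubes -/
private lemma T_six2 {u v : Polynomial ℤ} (hu : TT u) (hv : TT v) :
    TT ((6:ℤ) • (u * v)) := by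
  have hid : (6:ℤ) • (u * v)
      = (u + v + 1) ^ 3 + u ^ 3 + v ^ 3 + 1 - (u + v) ^ 3 - (u + 1) ^ 3 - (v + 1) ^ 3 := by
    rw [Polynomial.smul_eq_C_mul, show (C (6:ℤ)) = 6 by norm_num]; ring
  rw [hid]
  exact T_sub (T_sub (T_sub (.add (.add (.add (T_cube (.add (.add hu hv) T_one))
    (T_cube hu)) (T_cube hv)) T_one) (T_cube (.add hu hv)))
    (T_cube (.add hu T_one))) (T_cube (.add hv T_one))

/-- 6uvw as a combination of cubes -/
private lemma T_six3 {u v w : Polynomial ℤ} (hu : TT u) (hv : TT v) (hw : TT w) :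
    TT ((6:ℤ) • (u * v * w)) := by
  have hid : (6:ℤ) • (u * v * w)
      = (u + v + w) ^ 3 + u ^ 3 + v ^ 3 + w ^ 3
        - (u + v) ^ 3 - (u + w) ^ 3 - (v + w) ^ 3 := by
    rw [Polynomial.smul_eq_C_mul, show (C (6:ℤ)) = 6 by norm_num]; ring
  rw [hid]
  exact T_sub (T_sub (T_sub (.add (.add (.add (T_cube (.add (.add hu hv) hw))
    (T_cube hu)) (T_cube hv)) (T_cube hw)) (T_cube (.add hu hv)))
    (T_cube (.add hu hw))) (T_cube (.add hv hw))

/-- 3u²v + 3uv² as a combination of cubes -/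
private lemma T_pair {u v : Polynomial ℤ} (hu : TT u) (hv : TT v) :
    TT ((3:ℤ) • (u * u * v) + (3:ℤ) • (u * v * v)) := by
  have hid : (3:ℤ) • (u * u * v) + (3:ℤ) • (u * v * v)
      = (u + v) ^ 3 - u ^ 3 - v ^ 3 := by
    rw [Polynomial.smul_eq_C_mul, Polynomial.smul_eq_C_mul,
      show (C (3:ℤ)) = 3 by norm_num]; ring
  rw [hid]
  exact T_sub (T_sub (T_cube (.add hu hv)) (T_cube hu)) (T_cube hv)

-- ### small numeric lemmas
private lemma S3_pred {m : ℕ} (hm : 0 < m) (h3 : ¬ 3 ∣ m) : S3 (m - 1) = S3 m - 1 := by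
  rcases Nat.lt_or_ge m 2 with h | h
  · have : m = 1 := by omega
    subst this
    norm_num [S3_zero, S3_one]
  · have h1 := S3_eq m hm
    have h2 := S3_eq (m - 1) (by omega)
    have e1 : (m - 1) % 3 = m % 3 - 1 := by omega
    have e2 : (m - 1) / 3 = m / 3 := by omega
    rw [e1, e2] at h2
    omega

private lemma S3_ge_two {n : ℕ} (hn : 2 ≤ n) (h3 : ¬ 3 ∣ n) : 2 ≤ S3 n := by
  by_contra h
  have h1 := S3_eq n (by omega)
  have h2 : S3 n ≠ 0 := fun hh => by have := (S3_eq_zero_iff n).mp hh; omega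
  have h4 : S3 (n / 3) = 0 := by omega
  have := (S3_eq_zero_iff (n / 3)).mp h4
  omega

-- nonzero-ness helper
private lemma w_ne_zero {w : Polynomial ℤ} {k : ℕ} (hco : w.coeff (3 * k) = 3 ^ (E3 k)) :
    w ≠ 0 := by
  intro h
  rw [h, coeff_zero] at hco
  exact pow_ne_zero (E3 k) (by norm_num : (3:ℤ) ≠ 0) hco.symm

private lemma w_lead {w : Polynomial ℤ} {k : ℕ} (hdeg : w.natDegree = 3 * k)
    (hco : w.coeff (3 * k) = 3 ^ (E3 k)) : w.leadingCoeff = 3 ^ (E3 k) := by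
  have : w.leadingCoeff = w.coeff w.natDegree := rfl
  rw [this, hdeg, hco]

-- ### the main construction
private lemma exists_w (n : ℕ) : ∃ w : Polynomial ℤ,
    TT w ∧ w.natDegree = 3 * n ∧ w.coeff (3 * n) = 3 ^ (E3 n) := by
  induction n using Nat.strong_induction_on with
  | _ n ih =>
  rcases Nat.lt_or_ge n 2 with h2 | h2
  · interval_cases n
    · refine ⟨1, T_one, by simp, ?_⟩
      rw [E3_zero]; simp
    · refine ⟨X ^ 3, T_X3, by simp, ?_⟩
      rw [E3_one]; simp [coeff_X_pow]
  · by_cases h3 : 3 ∣ n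
    · -- n = 3 * (n/3)
      obtain ⟨w', hT', hdeg', hco'⟩ := ih (n / 3) (by omega)
      refine ⟨w'.comp (X ^ 3), .comp hT' T_X3, ?_, ?_⟩
      · rw [natDegree_comp, hdeg', natDegree_X_pow]; omega
      · have hdc : (w'.comp (X ^ 3)).natDegree = 3 * n := by
          rw [natDegree_comp, hdeg', natDegree_X_pow]; omega
        have : (w'.comp (X ^ 3)).coeff (3 * n) = (w'.comp (X ^ 3)).leadingCoeff := by
          rw [← hdc]; rfl
        rw [this, leadingCoeff_comp (by rw [natDegree_X_pow]; norm_num)]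
        rw [w_lead hdeg' hco', (monic_X_pow 3).leadingCoeff, one_pow, mul_one]
        have : E3 (3 * (n / 3)) = E3 (n / 3) := E3_mul3 _
        rw [show 3 * (n / 3) = n by omega] at this
        rw [this]
    · -- 3 ∤ n, n ≥ 2
      have hs2 : 2 ≤ S3 n := S3_ge_two h2 h3
      -- A element: leading coeff 2 * 3^(E3 n), degree 3n
      obtain ⟨a, b, hab, ha, hb, hbpos⟩ := S3_split n (by omega) hs2
      have hapos : 0 < a := by
        rcases Nat.eq_zero_or_pos a with rfl | h
        · rw [S3_zero] at ha; omega
        · exact h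
      obtain ⟨wa, hTa, hdega, hcoa⟩ := ih a (by omega)
      obtain ⟨wb, hTb, hdegb, hcob⟩ := ih b (by omega)
      have hwa0 := w_ne_zero hcoa
      have hwb0 := w_ne_zero hcob
      have hEa : E3 a = 0 := by unfold E3; omega
      obtain ⟨A, hTA, hAdeg, hAco⟩ :
          ∃ A : Polynomial ℤ, TT A ∧ A.natDegree ≤ 3 * n ∧
            A.coeff (3 * n) = 2 * 3 ^ (E3 n) := by
        rcases Nat.even_or_odd (S3 n) with hsm | hsm
        · -- even: A = 6 • (wa * wb)
          have hsme : S3 n % 2 = 0 := Nat.even_iff.mp hsm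
          have hEb : E3 n = E3 b + 1 := by unfold E3; omega
          have hdm : (wa * wb).natDegree = 3 * n :=
            by rw [natDegree_mul hwa0 hwb0, hdega, hdegb]; omega
          refine ⟨(6:ℤ) • (wa * wb), T_six2 hTa hTb, ?_, ?_⟩
          · exact le_trans (natDegree_smul_le _ _) (le_of_eq hdm)
          · rw [coeff_smul, show (3:ℕ) * n = (wa * wb).natDegree from hdm.symm]
            have : (wa * wb).coeff (wa * wb).natDegree = (wa * wb).leadingCoeff := rfl
            rw [this, leadingCoeff_mul, w_lead hdega hcoa, w_lead hdegb hcob,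
              hEa, hEb, smul_eq_mul]
            ring
        · -- odd: A = 6 • (wa * wc * wd)
          have hsmo : S3 n % 2 = 1 := Nat.odd_iff.mp hsm
          have hsb2 : 2 ≤ S3 b := by omega
          obtain ⟨c, d, hcd, hc, hd, hdpos⟩ := S3_split b hbpos hsb2
          have hcpos : 0 < c := by
            rcases Nat.eq_zero_or_pos c with rfl | h
            · rw [S3_zero] at hc; omega
            · exact h
          obtain ⟨wc, hTc, hdegc, hcoc⟩ := ih c (by omega)
          obtain ⟨wd, hTd, hdegd, hcod⟩ := ih d (by omega)
          have hwc0 := w_ne_zero hcoc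
          have hwd0 := w_ne_zero hcod
          have hEc : E3 c = 0 := by unfold E3; omega
          have hEd : E3 n = E3 d + 1 := by unfold E3; omega
          have hdm2 : (wa * wc).natDegree = 3 * a + 3 * c := by
            rw [natDegree_mul hwa0 hwc0, hdega, hdegc]
          have hm20 : wa * wc ≠ 0 := mul_ne_zero hwa0 hwc0
          have hdm : (wa * wc * wd).natDegree = 3 * n := by
            rw [natDegree_mul hm20 hwd0, hdm2, hdegd]; omega
          refine ⟨(6:ℤ) • (wa * wc * wd), T_six3 hTa hTc hTd, ?_, ?_⟩
          · exact le_trans (natDegree_smul_le _ _) (le_of_eq hdm)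
          · rw [coeff_smul, show (3:ℕ) * n = (wa * wc * wd).natDegree from hdm.symm]
            have : (wa * wc * wd).coeff (wa * wc * wd).natDegree
                = (wa * wc * wd).leadingCoeff := rfl
            rw [this, leadingCoeff_mul, leadingCoeff_mul,
              w_lead hdega hcoa, w_lead hdegc hcoc, w_lead hdegd hcod,
              hEa, hEc, hEd, smul_eq_mul]
            ring
      -- B element: leading coeff 3^(1 + 2 E3 j), degree 3n
      set i := n % 2 with hi
      set j := n / 2 with hj
      have hij : i < j := by
        have : n ≠ 3 := fun h => h3 (by omega)
        omega
      have hnij : n = i + 2 * j := by omega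
      obtain ⟨wi, hTi, hdegi, hcoi⟩ := ih i (by omega)
      obtain ⟨wj, hTj, hdegj, hcoj⟩ := ih j (by omega)
      have hwi0 := w_ne_zero hcoi
      have hwj0 := w_ne_zero hcoj
      have hEi : E3 i = 0 := by
        have : i = 0 ∨ i = 1 := by omega
        rcases this with h | h <;> rw [h]
        · exact E3_zero
        · exact E3_one
      have hdB2 : (wi * wj).natDegree = 3 * i + 3 * j := by
        rw [natDegree_mul hwi0 hwj0, hdegi, hdegj]
      have hB20 : wi * wj ≠ 0 := mul_ne_zero hwi0 hwj0
      have hdBig : (wi * wj * wj).natDegree = 3 * n := by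
        rw [natDegree_mul hB20 hwj0, hdB2, hdegj]; omega
      have hdSmall : (wi * wi * wj).natDegree < 3 * n := by
        rw [natDegree_mul (mul_ne_zero hwi0 hwi0) hwj0, natDegree_mul hwi0 hwi0,
          hdegi, hdegj]
        omega
      set B : Polynomial ℤ := (3:ℤ) • (wi * wi * wj) + (3:ℤ) • (wi * wj * wj) with hB
      have hTB : TT B := T_pair hTi hTj
      have hBdeg : B.natDegree ≤ 3 * n := by
        rw [hB]
        refine le_trans (natDegree_add_le _ _) (max_le ?_ ?_)
        · exact le_trans (natDegree_smul_le _ _) (le_of_lt hdSmall)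
        · exact le_trans (natDegree_smul_le _ _) (le_of_eq hdBig)
      have hBco : B.coeff (3 * n) = 3 ^ (1 + 2 * E3 j) := by
        rw [hB, coeff_add, coeff_smul, coeff_smul]
        rw [coeff_eq_zero_of_natDegree_lt hdSmall]
        rw [show (3:ℕ) * n = (wi * wj * wj).natDegree from hdBig.symm]
        have : (wi * wj * wj).coeff (wi * wj * wj).natDegree
            = (wi * wj * wj).leadingCoeff := rfl
        rw [this, leadingCoeff_mul, leadingCoeff_mul,
          w_lead hdegi hcoi, w_lead hdegj hcoj, hEi, smul_eq_mul, smul_eq_mul]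
        ring
      -- key inequality : E3 n ≤ 1 + 2 * E3 j
      have hkey : E3 n ≤ 1 + 2 * E3 j := by
        have hs2j : S3 (j + j) ≤ S3 j + S3 j := S3_add_le j j
        rcases Nat.eq_zero_or_pos i with hi0 | hi1
        · -- n = 2j
          have : j + j = n := by omega
          rw [this] at hs2j
          unfold E3; omega
        · -- n = 2j + 1
          have hpred : S3 (n - 1) = S3 n - 1 := S3_pred (by omega) h3
          have : j + j = n - 1 := by omega
          rw [this] at hs2j
          unfold E3; omega
      -- combine
      set v := 1 + 2 * E3 j - E3 n with hv
      have hv' : 1 + 2 * E3 j = E3 n + v := by omega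
      obtain ⟨u, hu⟩ : ∃ u : ℤ, (3:ℤ) ^ v = 2 * u + 1 := by
        have : Odd ((3:ℤ) ^ v) := Odd.pow ⟨1, by norm_num⟩
        obtain ⟨u, hu⟩ := this
        exact ⟨u, by omega⟩
      refine ⟨B - u • A, T_sub hTB (T_smul u hTA), ?_, ?_⟩
      · have hco : (B - u • A).coeff (3 * n) = 3 ^ (E3 n) := by
          rw [coeff_sub, coeff_smul, hBco, hAco, hv', pow_add, hu, smul_eq_mul]
          ring
        have hle : (B - u • A).natDegree ≤ 3 * n := by
          refine le_trans (natDegree_sub_le _ _) (max_le hBdeg ?_)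
          exact le_trans (natDegree_smul_le _ _) hAdeg
        have hge : 3 * n ≤ (B - u • A).natDegree := by
          apply le_natDegree_of_ne_zero
          rw [hco]
          exact pow_ne_zero _ (by norm_num)
        omega
      · rw [coeff_sub, coeff_smul, hBco, hAco, hv', pow_add, hu, smul_eq_mul]
        ring

private lemma Cond_backward : ∀ N : ℕ, ∀ p : Polynomial ℤ, Cond p → p.natDegree ≤ N → TT p := by
  intro N
  induction N using Nat.strong_induction_on with
  | _ N ihN =>
  intro p hc hdeg
  by_cases hp0 : p = 0
  · subst hp0; exact .zero
  by_cases hd0 : p.natDegree = 0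
  · obtain ⟨c, rfl⟩ : ∃ c : ℤ, p = C c := ⟨p.coeff 0, (Polynomial.eq_C_of_natDegree_eq_zero hd0)⟩
    have : C c = c • (1 : Polynomial ℤ) := by
      rw [Polynomial.smul_eq_C_mul, mul_one]
    rw [this]
    exact T_smul c T_one
  · -- positive degree
    set D := p.natDegree with hD
    have hlc : p.coeff D ≠ 0 := by
      rw [hD]
      exact fun h => hp0 (Polynomial.leadingCoeff_eq_zero.mp h)
    have h3D : 3 ∣ D := by
      by_contra h
      exact hlc (hc.1 D h)
    obtain ⟨n, hn⟩ := h3D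
    obtain ⟨w, hTw, hwdeg, hwco⟩ := exists_w n
    have hdv : (3:ℤ) ^ (E3 n) ∣ p.coeff D := by
      have h0 := hc.2 D
      rw [show E3 D = E3 n by rw [hn, E3_mul3]] at h0
      exact h0
    obtain ⟨d, hd⟩ := hdv
    set p' := p - d • w with hp'
    have hCw : Cond w := Cond_forward hTw
    have hc' : Cond p' := by
      constructor
      · intro k hk
        rw [hp', coeff_sub, coeff_smul, hc.1 k hk, hCw.1 k hk, smul_eq_mul,
          mul_zero, sub_zero]
      · intro k
        rw [hp', coeff_sub, coeff_smul, smul_eq_mul]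
        exact dvd_sub (hc.2 k) (Dvd.dvd.mul_left (hCw.2 k) d)
    have hco0 : p'.coeff D = 0 := by
      rw [hp', coeff_sub, coeff_smul, hn, hwco, smul_eq_mul, ← hn, hd]
      ring
    have hle : p'.natDegree ≤ D := by
      rw [hp']
      refine le_trans (natDegree_sub_le _ _) (max_le le_rfl ?_)
      exact le_trans (natDegree_smul_le _ _) (by rw [hwdeg, ← hn])
    have hsplit : p = p' + d • w := by rw [hp']; ring
    by_cases hp'0 : p' = 0
    · rw [hsplit, hp'0, zero_add]
      exact T_smul d hTw
    · have hlt : p'.natDegree < D := by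
        rcases lt_or_eq_of_le hle with h | h
        · exact h
        · exfalso
          apply hp'0
          apply Polynomial.leadingCoeff_eq_zero.mp
          rw [Polynomial.leadingCoeff, h, hco0]
      have hT' : TT p' := by
        have hDN : p'.natDegree < N := by omega
        exact ihN p'.natDegree hDN p' hc' le_rfl
      rw [hsplit]
      exact .add hT' (T_smul d hTw)

theorem mem_gen_1_x3 (p : Polynomial ℤ) :
    NRGen {1, X ^ 3} p ↔
      (∀ i : ℕ, ¬ 3 ∣ i → p.coeff i = 0) ∧
        ∀ i : ℕ, 3 ∣ i → (3 : ℤ) ^ ((Nat.digits 3 i).sum / 2) ∣ p.coeff i := by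
  constructor
  · intro h
    obtain ⟨h1, h2⟩ := Cond_forward h
    exact ⟨h1, fun i _ => h2 i⟩
  · rintro ⟨h1, h2⟩
    apply Cond_backward p.natDegree p ?_ le_rfl
    refine ⟨h1, fun i => ?_⟩
    by_cases h : 3 ∣ i
    · exact h2 i h
    · rw [h1 i h]; exact dvd_zero _
end
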